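/- arXiv:2501.13747 — 3 statements merged into one kernel-verified Lean document; each statement's English description precedes it below -/
import Mathlib

section
/- Let (⇀, ↼) be a matched pair of actions on the Kac–Paljutkin algebra H_8 satisfying z ⇀ g = h, z ⇀ h = g, z ⇀ gh = gh, g ↼ z = h, h ↼ z = g, gh ↼ z = gh. Then g ⇀ z = h ⇀ z = gh ⇀ z = z, and moreover: gz ⇀ z = hz ⇀ z = ghz ⇀ z = z ⇀ z; z ⇀ hz = gz ⇀ hz = hz ⇀ hz = ghz ⇀ hz = g(z ⇀ z); z ⇀ gz = gz ⇀ gz = hz ⇀ gz = ghz ⇀ gz = h(z ⇀ z); z ⇀ ghz = gz ⇀ ghz = hz ⇀ ghz = ghz ⇀ ghz = gh(z ⇀ z). -/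
open TensorProduct

noncomputable section

variable (k H : Type) [Field k] [Ring H] [HopfAlgebra k H]

/-- The map `x ⊗ y ↦ Σ (x₁ ⊗ y₁) ⊗ (x₂ ⊗ y₂)` (Sweedler notation). -/
def sweedler2 : H ⊗[k] H →ₗ[k] (H ⊗[k] H) ⊗[k] (H ⊗[k] H) :=
  (TensorProduct.tensorTensorTensorComm k H H H H).toLinearMap ∘ₗ
    TensorProduct.map Coalgebra.comul Coalgebra.comul

variable {k H}

/-- `f : H ⊗ H →ₗ H`, written `f (x ⊗ₜ y) = x ⇀ y`, is a left `H`-module coalgebra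
action of `H` on itself. -/
structure IsLeftModuleCoalgebraAction (f : H ⊗[k] H →ₗ[k] H) : Prop where
  /-- `x ⇀ (y ⇀ w) = (xy) ⇀ w` -/
  mul_act : f ∘ₗ TensorProduct.map LinearMap.id f ∘ₗ (TensorProduct.assoc k H H H).toLinearMap
    = f ∘ₗ TensorProduct.map (LinearMap.mul' k H) LinearMap.id
  /-- `1 ⇀ y = y` -/
  one_act : ∀ y : H, f ((1 : H) ⊗ₜ[k] y) = y
  /-- `Δ(x ⇀ y) = (x₁ ⇀ y₁) ⊗ (x₂ ⇀ y₂)` -/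
  comul_comp : Coalgebra.comul ∘ₗ f = TensorProduct.map f f ∘ₗ sweedler2 k H
  /-- `ε(x ⇀ y) = ε(x)ε(y)` -/
  counit_comp : Coalgebra.counit ∘ₗ f
    = (TensorProduct.lid k k).toLinearMap ∘ₗ
        TensorProduct.map Coalgebra.counit Coalgebra.counit

/-- `g : H ⊗ H →ₗ H`, written `g (x ⊗ₜ y) = x ↼ y`, is a right `H`-module coalgebra
action of `H` on itself. -/
structure IsRightModuleCoalgebraAction (g : H ⊗[k] H →ₗ[k] H) : Prop where
  /-- `(x ↼ y) ↼ w = x ↼ (yw)` -/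
  act_mul : g ∘ₗ TensorProduct.map g LinearMap.id
    = g ∘ₗ TensorProduct.map LinearMap.id (LinearMap.mul' k H) ∘ₗ
        (TensorProduct.assoc k H H H).toLinearMap
  /-- `x ↼ 1 = x` -/
  act_one : ∀ x : H, g (x ⊗ₜ[k] (1 : H)) = x
  /-- `Δ(x ↼ y) = (x₁ ↼ y₁) ⊗ (x₂ ↼ y₂)` -/
  comul_comp : Coalgebra.comul ∘ₗ g = TensorProduct.map g g ∘ₗ sweedler2 k H
  /-- `ε(x ↼ y) = ε(x)ε(y)` -/
  counit_comp : Coalgebra.counit ∘ₗ g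
    = (TensorProduct.lid k k).toLinearMap ∘ₗ
        TensorProduct.map Coalgebra.counit Coalgebra.counit

/-- `(f, g)` (written `f (x ⊗ₜ y) = x ⇀ y` and `g (x ⊗ₜ y) = x ↼ y`) is a matched pair
of actions on the Hopf algebra `H`. -/
structure IsMatchedPairOfActions (f g : H ⊗[k] H →ₗ[k] H) : Prop where
  left : IsLeftModuleCoalgebraAction f
  right : IsRightModuleCoalgebraAction g
  /-- `x ⇀ (ab) = (x₁ ⇀ a₁)((x₂ ↼ a₂) ⇀ b)` -/
  mp1 : f ∘ₗ TensorProduct.map LinearMap.id (LinearMap.mul' k H) ∘ₗ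
      (TensorProduct.assoc k H H H).toLinearMap
    = LinearMap.mul' k H ∘ₗ
        TensorProduct.map f (f ∘ₗ TensorProduct.map g LinearMap.id) ∘ₗ
        (TensorProduct.assoc k (H ⊗[k] H) (H ⊗[k] H) H).toLinearMap ∘ₗ
        TensorProduct.map (sweedler2 k H) LinearMap.id
  /-- `x ⇀ 1 = ε(x)1` -/
  mp2 : ∀ x : H, f (x ⊗ₜ[k] (1 : H)) = Coalgebra.counit (R := k) x • (1 : H)
  /-- `(xy) ↼ a = (x ↼ (y₁ ⇀ a₁))(y₂ ↼ a₂)` -/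
  mp3 : g ∘ₗ TensorProduct.map (LinearMap.mul' k H) LinearMap.id
    = LinearMap.mul' k H ∘ₗ
        TensorProduct.map (g ∘ₗ TensorProduct.map LinearMap.id f) g ∘ₗ
        (TensorProduct.assoc k H (H ⊗[k] H) (H ⊗[k] H)).symm.toLinearMap ∘ₗ
        TensorProduct.map LinearMap.id (sweedler2 k H) ∘ₗ
        (TensorProduct.assoc k H H H).toLinearMap
  /-- `1 ↼ a = ε(a)1` -/
  mp4 : ∀ a : H, g ((1 : H) ⊗ₜ[k] a) = Coalgebra.counit (R := k) a • (1 : H)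
  /-- `(x₁ ⇀ a₁) ⊗ (x₂ ↼ a₂) = (x₂ ⇀ a₂) ⊗ (x₁ ↼ a₁)` -/
  mp5 : TensorProduct.map f g ∘ₗ sweedler2 k H
    = TensorProduct.map f g ∘ₗ
        (TensorProduct.comm k (H ⊗[k] H) (H ⊗[k] H)).toLinearMap ∘ₗ sweedler2 k H
  /-- `xy = (x₁ ⇀ y₁)(x₂ ↼ y₂)` -/
  factor : LinearMap.mul' k H
    = LinearMap.mul' k H ∘ₗ TensorProduct.map f g ∘ₗ sweedler2 k H

variable (k H)

/-- The Yang–Baxter operator `r (x ⊗ₜ y) = (x₁ ⇀ y₁) ⊗ (x₂ ↼ y₂)` associated to a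
matched pair of actions. -/
def ybOp (f g : H ⊗[k] H →ₗ[k] H) : H ⊗[k] H →ₗ[k] H ⊗[k] H :=
  TensorProduct.map f g ∘ₗ sweedler2 k H

end
noncomputable section

/-! ### The Kac–Paljutkin algebra `H₈`, characterized by generators and relations.

A Hopf algebra `H` over `k` together with elements `g h z : H` and a basis
`b = (1, g, h, gh, z, gz, hz, ghz)` satisfying the defining relations of the
Kac–Paljutkin algebra.  Since the comultiplication, counit and antipode of a Hopf
algebra are (anti)algebra morphisms, these data determine the whole Hopf algebra
structure of `H₈`. -/
structure IsKacPaljutkin (k H : Type) [Field k] [Ring H] [HopfAlgebra k H]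
    (g h z : H) (b : Module.Basis (Fin 8) k H) : Prop where
  basis_eq : ⇑b = ![1, g, h, g * h, z, g * z, h * z, g * h * z]
  g_sq : g * g = 1
  h_sq : h * h = 1
  z_sq : z * z = (2 : k)⁻¹ • (1 + g + h - g * h)
  gh_comm : g * h = h * g
  zg : z * g = h * z
  zh : z * h = g * z
  comul_g : Coalgebra.comul (R := k) g = g ⊗ₜ[k] g
  comul_h : Coalgebra.comul (R := k) h = h ⊗ₜ[k] h
  comul_z : Coalgebra.comul (R := k) z
    = (2 : k)⁻¹ • (z ⊗ₜ[k] z + (g * z) ⊗ₜ[k] z + z ⊗ₜ[k] (h * z) - (g * z) ⊗ₜ[k] (h * z))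
  counit_g : Coalgebra.counit (R := k) g = 1
  counit_h : Coalgebra.counit (R := k) h = 1
  counit_z : Coalgebra.counit (R := k) z = 1
  antipode_g : HopfAlgebra.antipode (R := k) g = g
  antipode_h : HopfAlgebra.antipode (R := k) h = h
  antipode_z : HopfAlgebra.antipode (R := k) z = z

/-- The element `z³ = (1/2)(z + gz + hz - ghz)` of the Kac–Paljutkin algebra. -/
def zCubed (k : Type) {H : Type} [Field k] [Ring H] [HopfAlgebra k H] (g h z : H) : H :=
  (2 : k)⁻¹ • (z + g * z + h * z - g * h * z)

end
noncomputable section Aux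
set_option linter.unusedSectionVars false
set_option maxHeartbeats 1000000
set_option synthInstance.maxHeartbeats 400000
open Coalgebra Bialgebra

variable {k H : Type} [Field k] [CharZero k] [Ring H] [HopfAlgebra k H]
variable {lact ract : H ⊗[k] H →ₗ[k] H}

lemma mod_left (hL : IsLeftModuleCoalgebraAction lact) (x y a : H) :
    lact (x ⊗ₜ[k] lact (y ⊗ₜ[k] a)) = lact ((x * y) ⊗ₜ[k] a) := by
  simpa using LinearMap.congr_fun hL.mul_act ((x ⊗ₜ[k] y) ⊗ₜ[k] a)

lemma mod_right (hR : IsRightModuleCoalgebraAction ract) (x y a : H) :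
    ract (ract (x ⊗ₜ[k] y) ⊗ₜ[k] a) = ract (x ⊗ₜ[k] (y * a)) := by
  simpa using LinearMap.congr_fun hR.act_mul ((x ⊗ₜ[k] y) ⊗ₜ[k] a)

lemma comul_lact (hL : IsLeftModuleCoalgebraAction lact) {x y : H}
    (hx : comul (R := k) x = x ⊗ₜ[k] x) (hy : comul (R := k) y = y ⊗ₜ[k] y) :
    comul (R := k) (lact (x ⊗ₜ[k] y)) = lact (x ⊗ₜ[k] y) ⊗ₜ[k] lact (x ⊗ₜ[k] y) := by
  simpa [sweedler2, hx, hy] using LinearMap.congr_fun hL.comul_comp (x ⊗ₜ[k] y)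

lemma comul_ract (hR : IsRightModuleCoalgebraAction ract) {x y : H}
    (hx : comul (R := k) x = x ⊗ₜ[k] x) (hy : comul (R := k) y = y ⊗ₜ[k] y) :
    comul (R := k) (ract (x ⊗ₜ[k] y)) = ract (x ⊗ₜ[k] y) ⊗ₜ[k] ract (x ⊗ₜ[k] y) := by
  simpa [sweedler2, hx, hy] using LinearMap.congr_fun hR.comul_comp (x ⊗ₜ[k] y)

lemma counit_lact (hL : IsLeftModuleCoalgebraAction lact) (x y : H) :
    counit (R := k) (lact (x ⊗ₜ[k] y)) = counit (R := k) x * counit (R := k) y := by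
  simpa [smul_eq_mul] using LinearMap.congr_fun hL.counit_comp (x ⊗ₜ[k] y)

lemma counit_ract (hR : IsRightModuleCoalgebraAction ract) (x y : H) :
    counit (R := k) (ract (x ⊗ₜ[k] y)) = counit (R := k) x * counit (R := k) y := by
  simpa [smul_eq_mul] using LinearMap.congr_fun hR.counit_comp (x ⊗ₜ[k] y)

lemma mp1_gl_gl (hmp : IsMatchedPairOfActions lact ract) {x a : H}
    (hx : comul (R := k) x = x ⊗ₜ[k] x) (ha : comul (R := k) a = a ⊗ₜ[k] a) (bb : H) :
    lact (x ⊗ₜ[k] (a * bb))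
      = lact (x ⊗ₜ[k] a) * lact (ract (x ⊗ₜ[k] a) ⊗ₜ[k] bb) := by
  simpa [sweedler2, hx, ha, LinearMap.mul'_apply] using
    LinearMap.congr_fun hmp.mp1 ((x ⊗ₜ[k] a) ⊗ₜ[k] bb)

end Aux
noncomputable section Aux2
set_option linter.unusedSectionVars false
set_option maxHeartbeats 1000000
set_option synthInstance.maxHeartbeats 400000
open Coalgebra Bialgebra

variable {k H : Type} [Field k] [CharZero k] [Ring H] [HopfAlgebra k H]
variable {lact ract : H ⊗[k] H →ₗ[k] H}

lemma mp1_z_gl (hmp : IsMatchedPairOfActions lact ract) {g h z : H}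
    (hz : comul (R := k) z = (2 : k)⁻¹ •
      (z ⊗ₜ[k] z + (g * z) ⊗ₜ[k] z + z ⊗ₜ[k] (h * z) - (g * z) ⊗ₜ[k] (h * z)))
    {a : H} (ha : comul (R := k) a = a ⊗ₜ[k] a) (bb : H) :
    lact (z ⊗ₜ[k] (a * bb)) = (2 : k)⁻¹ •
      (lact (z ⊗ₜ[k] a) * lact (ract (z ⊗ₜ[k] a) ⊗ₜ[k] bb)
        + lact ((g * z) ⊗ₜ[k] a) * lact (ract (z ⊗ₜ[k] a) ⊗ₜ[k] bb)
        + lact (z ⊗ₜ[k] a) * lact (ract ((h * z) ⊗ₜ[k] a) ⊗ₜ[k] bb)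
        - lact ((g * z) ⊗ₜ[k] a) * lact (ract ((h * z) ⊗ₜ[k] a) ⊗ₜ[k] bb)) := by
  have := LinearMap.congr_fun hmp.mp1 ((z ⊗ₜ[k] a) ⊗ₜ[k] bb)
  simp only [sweedler2, LinearMap.coe_comp, LinearEquiv.coe_coe, Function.comp_apply,
    TensorProduct.assoc_tmul, TensorProduct.map_tmul, LinearMap.id_coe, id_eq,
    LinearMap.mul'_apply, hz, ha] at this
  simpa [← TensorProduct.smul_tmul', TensorProduct.tmul_smul, TensorProduct.add_tmul,
    TensorProduct.tmul_add, TensorProduct.sub_tmul, TensorProduct.tmul_sub,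
    LinearMap.mul'_apply] using this

lemma mp1_gl_z (hmp : IsMatchedPairOfActions lact ract) {g h z : H}
    (hz : comul (R := k) z = (2 : k)⁻¹ •
      (z ⊗ₜ[k] z + (g * z) ⊗ₜ[k] z + z ⊗ₜ[k] (h * z) - (g * z) ⊗ₜ[k] (h * z)))
    {x : H} (hx : comul (R := k) x = x ⊗ₜ[k] x) (bb : H) :
    lact (x ⊗ₜ[k] (z * bb)) = (2 : k)⁻¹ •
      (lact (x ⊗ₜ[k] z) * lact (ract (x ⊗ₜ[k] z) ⊗ₜ[k] bb)
        + lact (x ⊗ₜ[k] (g * z)) * lact (ract (x ⊗ₜ[k] z) ⊗ₜ[k] bb)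
        + lact (x ⊗ₜ[k] z) * lact (ract (x ⊗ₜ[k] (h * z)) ⊗ₜ[k] bb)
        - lact (x ⊗ₜ[k] (g * z)) * lact (ract (x ⊗ₜ[k] (h * z)) ⊗ₜ[k] bb)) := by
  have := LinearMap.congr_fun hmp.mp1 ((x ⊗ₜ[k] z) ⊗ₜ[k] bb)
  simp only [sweedler2, LinearMap.coe_comp, LinearEquiv.coe_coe, Function.comp_apply,
    TensorProduct.assoc_tmul, TensorProduct.map_tmul, LinearMap.id_coe, id_eq,
    LinearMap.mul'_apply, hz, hx] at this
  simpa [← TensorProduct.smul_tmul', TensorProduct.tmul_smul, TensorProduct.add_tmul,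
    TensorProduct.tmul_add, TensorProduct.sub_tmul, TensorProduct.tmul_sub,
    LinearMap.mul'_apply] using this

lemma mp3_z_gl (hmp : IsMatchedPairOfActions lact ract) {g h z : H}
    (hz : comul (R := k) z = (2 : k)⁻¹ •
      (z ⊗ₜ[k] z + (g * z) ⊗ₜ[k] z + z ⊗ₜ[k] (h * z) - (g * z) ⊗ₜ[k] (h * z)))
    {a : H} (ha : comul (R := k) a = a ⊗ₜ[k] a) (x : H) :
    ract ((x * z) ⊗ₜ[k] a) = (2 : k)⁻¹ •
      (ract (x ⊗ₜ[k] lact (z ⊗ₜ[k] a)) * ract (z ⊗ₜ[k] a)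
        + ract (x ⊗ₜ[k] lact ((g * z) ⊗ₜ[k] a)) * ract (z ⊗ₜ[k] a)
        + ract (x ⊗ₜ[k] lact (z ⊗ₜ[k] a)) * ract ((h * z) ⊗ₜ[k] a)
        - ract (x ⊗ₜ[k] lact ((g * z) ⊗ₜ[k] a)) * ract ((h * z) ⊗ₜ[k] a)) := by
  have := LinearMap.congr_fun hmp.mp3 ((x ⊗ₜ[k] z) ⊗ₜ[k] a)
  simp only [sweedler2, LinearMap.coe_comp, LinearEquiv.coe_coe, Function.comp_apply,
    TensorProduct.assoc_tmul, TensorProduct.map_tmul, LinearMap.id_coe, id_eq,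
    LinearMap.mul'_apply, hz, ha] at this
  simpa [← TensorProduct.smul_tmul', TensorProduct.tmul_smul, TensorProduct.add_tmul,
    TensorProduct.tmul_add, TensorProduct.sub_tmul, TensorProduct.tmul_sub,
    LinearMap.mul'_apply] using this

lemma factor_z_gl (hmp : IsMatchedPairOfActions lact ract) {g h z : H}
    (hz : comul (R := k) z = (2 : k)⁻¹ •
      (z ⊗ₜ[k] z + (g * z) ⊗ₜ[k] z + z ⊗ₜ[k] (h * z) - (g * z) ⊗ₜ[k] (h * z)))
    {y : H} (hy : comul (R := k) y = y ⊗ₜ[k] y) :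
    z * y = (2 : k)⁻¹ •
      (lact (z ⊗ₜ[k] y) * ract (z ⊗ₜ[k] y)
        + lact ((g * z) ⊗ₜ[k] y) * ract (z ⊗ₜ[k] y)
        + lact (z ⊗ₜ[k] y) * ract ((h * z) ⊗ₜ[k] y)
        - lact ((g * z) ⊗ₜ[k] y) * ract ((h * z) ⊗ₜ[k] y)) := by
  have := LinearMap.congr_fun hmp.factor (z ⊗ₜ[k] y)
  simp only [sweedler2, LinearMap.coe_comp, LinearEquiv.coe_coe, Function.comp_apply,
    TensorProduct.map_tmul, LinearMap.id_coe, id_eq,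
    LinearMap.mul'_apply, hz, hy] at this
  simpa [← TensorProduct.smul_tmul', TensorProduct.tmul_smul, TensorProduct.add_tmul,
    TensorProduct.tmul_add, TensorProduct.sub_tmul, TensorProduct.tmul_sub,
    LinearMap.mul'_apply] using this

lemma factor_gl_z (hmp : IsMatchedPairOfActions lact ract) {g h z : H}
    (hz : comul (R := k) z = (2 : k)⁻¹ •
      (z ⊗ₜ[k] z + (g * z) ⊗ₜ[k] z + z ⊗ₜ[k] (h * z) - (g * z) ⊗ₜ[k] (h * z)))
    {x : H} (hx : comul (R := k) x = x ⊗ₜ[k] x) :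
    x * z = (2 : k)⁻¹ •
      (lact (x ⊗ₜ[k] z) * ract (x ⊗ₜ[k] z)
        + lact (x ⊗ₜ[k] (g * z)) * ract (x ⊗ₜ[k] z)
        + lact (x ⊗ₜ[k] z) * ract (x ⊗ₜ[k] (h * z))
        - lact (x ⊗ₜ[k] (g * z)) * ract (x ⊗ₜ[k] (h * z))) := by
  have := LinearMap.congr_fun hmp.factor (x ⊗ₜ[k] z)
  simp only [sweedler2, LinearMap.coe_comp, LinearEquiv.coe_coe, Function.comp_apply,
    TensorProduct.map_tmul, LinearMap.id_coe, id_eq,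
    LinearMap.mul'_apply, hz, hx] at this
  simpa [← TensorProduct.smul_tmul', TensorProduct.tmul_smul, TensorProduct.add_tmul,
    TensorProduct.tmul_add, TensorProduct.sub_tmul, TensorProduct.tmul_sub,
    LinearMap.mul'_apply] using this

end Aux2
noncomputable section Aux3
set_option linter.unusedSectionVars false
set_option maxHeartbeats 2000000
set_option synthInstance.maxHeartbeats 400000
open Coalgebra Bialgebra

variable {k H : Type} [Field k] [CharZero k] [Ring H] [HopfAlgebra k H]
variable {g h z : H} {b : Module.Basis (Fin 8) k H}

lemma KP.hb (hKP : IsKacPaljutkin k H g h z b) :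
    b 0 = 1 ∧ b 1 = g ∧ b 2 = h ∧ b 3 = g * h ∧ b 4 = z ∧ b 5 = g * z ∧ b 6 = h * z
      ∧ b 7 = g * h * z := by
  refine ⟨?_, ?_, ?_, ?_, ?_, ?_, ?_, ?_⟩ <;>
    · rw [show ∀ i, b i = _ from congrFun hKP.basis_eq]
      rfl

-- multiplication normalization lemmas
lemma KP.gg' (hKP : IsKacPaljutkin k H g h z b) (x : H) : g * (g * x) = x := by
  rw [← mul_assoc, hKP.g_sq, one_mul]
lemma KP.hh' (hKP : IsKacPaljutkin k H g h z b) (x : H) : h * (h * x) = x := by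
  rw [← mul_assoc, hKP.h_sq, one_mul]
lemma KP.hg (hKP : IsKacPaljutkin k H g h z b) : h * g = g * h := hKP.gh_comm.symm
lemma KP.hg' (hKP : IsKacPaljutkin k H g h z b) (x : H) : h * (g * x) = g * (h * x) := by
  rw [← mul_assoc, KP.hg hKP, mul_assoc]
lemma KP.zg' (hKP : IsKacPaljutkin k H g h z b) (x : H) : z * (g * x) = h * (z * x) := by
  rw [← mul_assoc, hKP.zg, mul_assoc]
lemma KP.zh' (hKP : IsKacPaljutkin k H g h z b) (x : H) : z * (h * x) = g * (z * x) := by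
  rw [← mul_assoc, hKP.zh, mul_assoc]

end Aux3
noncomputable section Aux4
set_option linter.unusedSectionVars false
set_option maxHeartbeats 2000000
set_option synthInstance.maxHeartbeats 400000
open Coalgebra Bialgebra

variable {k H : Type} [Field k] [CharZero k] [Ring H] [HopfAlgebra k H]
variable {g h z : H} {b : Module.Basis (Fin 8) k H}

lemma KP.comul_gh (hKP : IsKacPaljutkin k H g h z b) :
    comul (R := k) (g * h) = (g * h) ⊗ₜ[k] (g * h) := by
  rw [Bialgebra.comul_mul, hKP.comul_g, hKP.comul_h, Algebra.TensorProduct.tmul_mul_tmul]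

lemma KP.counit_gh (hKP : IsKacPaljutkin k H g h z b) :
    counit (R := k) (g * h) = 1 := by
  rw [Bialgebra.counit_mul, hKP.counit_g, hKP.counit_h, one_mul]

lemma KP.comul_gz (hKP : IsKacPaljutkin k H g h z b) :
    comul (R := k) (g * z) = (2 : k)⁻¹ • ((g * z) ⊗ₜ[k] (g * z) + z ⊗ₜ[k] (g * z)
      + (g * z) ⊗ₜ[k] (g * h * z) - z ⊗ₜ[k] (g * h * z)) := by
  rw [Bialgebra.comul_mul, hKP.comul_g, hKP.comul_z]
  simp only [smul_add, smul_sub, mul_add, mul_sub, mul_smul_comm,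
    Algebra.TensorProduct.tmul_mul_tmul]
  simp [KP.gg' hKP, KP.hg' hKP, mul_assoc]

lemma KP.comul_hz (hKP : IsKacPaljutkin k H g h z b) :
    comul (R := k) (h * z) = (2 : k)⁻¹ • ((h * z) ⊗ₜ[k] (h * z) + (g * h * z) ⊗ₜ[k] (h * z)
      + (h * z) ⊗ₜ[k] z - (g * h * z) ⊗ₜ[k] z) := by
  rw [Bialgebra.comul_mul, hKP.comul_h, hKP.comul_z]
  simp only [smul_add, smul_sub, mul_add, mul_sub, mul_smul_comm,
    Algebra.TensorProduct.tmul_mul_tmul]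
  simp [KP.hh' hKP, KP.hg' hKP, mul_assoc]

lemma KP.comul_ghz (hKP : IsKacPaljutkin k H g h z b) :
    comul (R := k) (g * h * z) = (2 : k)⁻¹ • ((g * h * z) ⊗ₜ[k] (g * h * z)
      + (h * z) ⊗ₜ[k] (g * h * z) + (g * h * z) ⊗ₜ[k] (g * z)
      - (h * z) ⊗ₜ[k] (g * z)) := by
  rw [mul_assoc, Bialgebra.comul_mul, hKP.comul_g, KP.comul_hz hKP]
  simp only [smul_add, smul_sub, mul_add, mul_sub, mul_smul_comm,
    Algebra.TensorProduct.tmul_mul_tmul]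
  simp [KP.gg' hKP, KP.hg' hKP, mul_assoc]

lemma KP.counit_gz (hKP : IsKacPaljutkin k H g h z b) : counit (R := k) (g * z) = 1 := by
  rw [Bialgebra.counit_mul, hKP.counit_g, hKP.counit_z, one_mul]
lemma KP.counit_hz (hKP : IsKacPaljutkin k H g h z b) : counit (R := k) (h * z) = 1 := by
  rw [Bialgebra.counit_mul, hKP.counit_h, hKP.counit_z, one_mul]
lemma KP.counit_ghz (hKP : IsKacPaljutkin k H g h z b) :
    counit (R := k) (g * h * z) = 1 := by
  rw [mul_assoc, Bialgebra.counit_mul, hKP.counit_g, KP.counit_hz hKP, one_mul]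

end Aux4
noncomputable section Aux5
set_option linter.unusedSectionVars false
set_option maxHeartbeats 4000000
set_option synthInstance.maxHeartbeats 400000
open Coalgebra Bialgebra

variable {k H : Type} [Field k] [CharZero k] [Ring H] [HopfAlgebra k H]
variable {g h z : H} {b : Module.Basis (Fin 8) k H}

lemma KP.classify (hKP : IsKacPaljutkin k H g h z b) {u : H}
    (hu : comul (R := k) u = u ⊗ₜ[k] u) (hε : counit (R := k) u = 1) :
    u = 1 ∨ u = g ∨ u = h ∨ u = g * h := by
  obtain ⟨hb0, hb1, hb2, hb3, hb4, hb5, hb6, hb7⟩ := KP.hb hKP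
  set a : Fin 8 → k := fun i => b.repr u i with ha
  have hsum : ∑ i, a i • b i = u := b.sum_repr u
  have C0 : comul (R := k) (b 0) = b 0 ⊗ₜ[k] b 0 := by
    rw [hb0, Bialgebra.comul_one, Algebra.TensorProduct.one_def]
  have C1 : comul (R := k) (b 1) = b 1 ⊗ₜ[k] b 1 := by rw [hb1]; exact hKP.comul_g
  have C2 : comul (R := k) (b 2) = b 2 ⊗ₜ[k] b 2 := by rw [hb2]; exact hKP.comul_h
  have C3 : comul (R := k) (b 3) = b 3 ⊗ₜ[k] b 3 := by rw [hb3]; exact KP.comul_gh hKP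
  have C4 : comul (R := k) (b 4) = (2 : k)⁻¹ •
      (b 4 ⊗ₜ[k] b 4 + b 5 ⊗ₜ[k] b 4 + b 4 ⊗ₜ[k] b 6 - b 5 ⊗ₜ[k] b 6) := by
    rw [hb4, hb5, hb6]; exact hKP.comul_z
  have C5 : comul (R := k) (b 5) = (2 : k)⁻¹ •
      (b 5 ⊗ₜ[k] b 5 + b 4 ⊗ₜ[k] b 5 + b 5 ⊗ₜ[k] b 7 - b 4 ⊗ₜ[k] b 7) := by
    rw [hb4, hb5, hb7]; exact KP.comul_gz hKP
  have C6 : comul (R := k) (b 6) = (2 : k)⁻¹ •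
      (b 6 ⊗ₜ[k] b 6 + b 7 ⊗ₜ[k] b 6 + b 6 ⊗ₜ[k] b 4 - b 7 ⊗ₜ[k] b 4) := by
    rw [hb4, hb6, hb7]; exact KP.comul_hz hKP
  have C7 : comul (R := k) (b 7) = (2 : k)⁻¹ •
      (b 7 ⊗ₜ[k] b 7 + b 6 ⊗ₜ[k] b 7 + b 7 ⊗ₜ[k] b 5 - b 6 ⊗ₜ[k] b 5) := by
    rw [hb5, hb6, hb7]; exact KP.comul_ghz hKP
  have hcom : comul (R := k) u = ∑ i, a i • comul (R := k) (b i) := by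
    conv_lhs => rw [← hsum]
    rw [map_sum]
    simp [map_smul]
  have key : ∀ i j : Fin 8, a i * a j
      = (b.tensorProduct b).repr (∑ i, a i • comul (R := k) (b i)) (i, j) := by
    intro i j
    rw [← hcom, hu]
    simp only [Module.Basis.tensorProduct_repr_tmul_apply, ha, smul_eq_mul]
    ring
  have ev : ∀ i j : Fin 8, (b.tensorProduct b).repr (∑ i, a i • comul (R := k) (b i)) (i, j)
      = a 0 * ((b.tensorProduct b).repr (comul (R := k) (b 0)) (i, j))
      + a 1 * ((b.tensorProduct b).repr (comul (R := k) (b 1)) (i, j))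
      + a 2 * ((b.tensorProduct b).repr (comul (R := k) (b 2)) (i, j))
      + a 3 * ((b.tensorProduct b).repr (comul (R := k) (b 3)) (i, j))
      + a 4 * ((b.tensorProduct b).repr (comul (R := k) (b 4)) (i, j))
      + a 5 * ((b.tensorProduct b).repr (comul (R := k) (b 5)) (i, j))
      + a 6 * ((b.tensorProduct b).repr (comul (R := k) (b 6)) (i, j))
      + a 7 * ((b.tensorProduct b).repr (comul (R := k) (b 7)) (i, j)) := by
    intro i j
    rw [Fin.sum_univ_eight]
    simp [add_assoc]
  have e67 := (key 6 7).trans (ev 6 7)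
  have e76 := (key 7 6).trans (ev 7 6)
  have e64 := (key 6 4).trans (ev 6 4)
  have e74 := (key 7 4).trans (ev 7 4)
  have e46 := (key 4 6).trans (ev 4 6)
  have e45 := (key 4 5).trans (ev 4 5)
  have e01 := (key 0 1).trans (ev 0 1)
  have e02 := (key 0 2).trans (ev 0 2)
  have e03 := (key 0 3).trans (ev 0 3)
  have e12 := (key 1 2).trans (ev 1 2)
  have e13 := (key 1 3).trans (ev 1 3)
  have e23 := (key 2 3).trans (ev 2 3)
  rw [C0, C1, C2, C3, C4, C5, C6, C7] at e67 e76 e64 e74 e46 e45 e01 e02 e03 e12 e13 e23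
  simp only [map_smul, map_add, map_sub, Finsupp.smul_apply, Finsupp.add_apply,
    Finsupp.sub_apply, Module.Basis.tensorProduct_repr_tmul_apply, Module.Basis.repr_self,
    Finsupp.single_apply, smul_eq_mul] at e67 e76 e64 e74 e46 e45 e01 e02 e03 e12 e13 e23
  simp only [Fin.isValue, Fin.reduceEq, if_true, if_false, reduceIte] at e67 e76 e64 e74 e46 e45 e01 e02 e03 e12 e13 e23
  norm_num at e67 e76 e64 e74 e46 e45 e01 e02 e03 e12 e13 e23
  have h67 : a 6 = a 7 := by linear_combination 2*e67 - 2*e76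
  have h7 : a 7 = 0 := by
    rcases e64 with h4 | h6
    · rw [h67, h4] at e74
      linear_combination e74
    · rw [h67] at h6; exact h6
  have h6 : a 6 = 0 := h67.trans h7
  have h4 : a 4 = 0 := by
    rcases e46 with h46 | h46
    · rw [h6] at h46; norm_num at h46
    · exact h46
  have h5 : a 5 = 0 := by linear_combination -2*e45 + 2*(a 5)*h4
  have ceq : a 0 + a 1 + a 2 + a 3 + a 4 + a 5 + a 6 + a 7 = 1 := by
    have hc : counit (R := k) u
        = a 0 + a 1 + a 2 + a 3 + a 4 + a 5 + a 6 + a 7 := by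
      conv_lhs => rw [← hsum]
      rw [map_sum, Fin.sum_univ_eight]
      simp [map_smul, hb0, hb1, hb2, hb3, hb4, hb5, hb6, hb7, hKP.counit_g,
        hKP.counit_h, hKP.counit_z, KP.counit_gh hKP, KP.counit_gz hKP,
        KP.counit_hz hKP, KP.counit_ghz hKP, Bialgebra.counit_one, smul_eq_mul]
    rw [← hc, hε]
  have hu4 : u = a 0 • (1 : H) + a 1 • g + a 2 • h + a 3 • (g * h) := by
    conv_lhs => rw [← hsum]
    rw [Fin.sum_univ_eight, hb0, hb1, hb2, hb3, hb4, hb5, hb6, hb7, h4, h5, h6, h7]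
    simp
  rw [h4, h5, h6, h7] at ceq
  by_cases H0 : a 0 = 0
  · by_cases H1 : a 1 = 0
    · by_cases H2 : a 2 = 0
      · have h3 : a 3 = 1 := by linear_combination ceq - H0 - H1 - H2
        right; right; right
        rw [hu4, H0, H1, H2, h3]; simp
      · have h3 : a 3 = 0 := e23.resolve_left H2
        have h2 : a 2 = 1 := by linear_combination ceq - H0 - H1 - h3
        right; right; left
        rw [hu4, H0, H1, h3, h2]; simp
    · have h2 : a 2 = 0 := e12.resolve_left H1
      have h3 : a 3 = 0 := e13.resolve_left H1
      have h1 : a 1 = 1 := by linear_combination ceq - H0 - h2 - h3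
      right; left
      rw [hu4, H0, h1, h2, h3]; simp
  · have h1 : a 1 = 0 := e01.resolve_left H0
    have h2 : a 2 = 0 := e02.resolve_left H0
    have h3 : a 3 = 0 := e03.resolve_left H0
    have h0 : a 0 = 1 := by linear_combination ceq - h1 - h2 - h3
    left
    rw [hu4, h0, h1, h2, h3]; simp

end Aux5
noncomputable section Aux6
set_option linter.unusedSectionVars false
set_option maxHeartbeats 2000000
set_option synthInstance.maxHeartbeats 400000
open Coalgebra Bialgebra

variable {k H : Type} [Field k] [CharZero k] [Ring H] [HopfAlgebra k H]
variable {g h z : H} {b : Module.Basis (Fin 8) k H}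

lemma KP.repr_one (hKP : IsKacPaljutkin k H g h z b) :
    b.repr (1 : H) = Finsupp.single 0 1 := by
  rw [← (KP.hb hKP).1]; exact b.repr_self 0
lemma KP.repr_g (hKP : IsKacPaljutkin k H g h z b) :
    b.repr g = Finsupp.single 1 1 := by
  rw [← (KP.hb hKP).2.1]; exact b.repr_self 1
lemma KP.repr_h (hKP : IsKacPaljutkin k H g h z b) :
    b.repr h = Finsupp.single 2 1 := by
  rw [← (KP.hb hKP).2.2.1]; exact b.repr_self 2
lemma KP.repr_gh (hKP : IsKacPaljutkin k H g h z b) :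
    b.repr (g * h) = Finsupp.single 3 1 := by
  rw [← (KP.hb hKP).2.2.2.1]; exact b.repr_self 3

lemma KP.coord {hKP : IsKacPaljutkin k H g h z b} {x y : H} (e : x = y) (i : Fin 8) :
    b.repr x i = b.repr y i := by rw [e]

-- distinctness
lemma KP.ne_1g (hKP : IsKacPaljutkin k H g h z b) : (1 : H) ≠ g := by
  intro e
  have c := KP.coord (hKP := hKP) e 0
  simp [KP.repr_one hKP, KP.repr_g hKP, Finsupp.single_apply] at c
lemma KP.ne_1h (hKP : IsKacPaljutkin k H g h z b) : (1 : H) ≠ h := by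
  intro e
  have c := KP.coord (hKP := hKP) e 0
  simp [KP.repr_one hKP, KP.repr_h hKP, Finsupp.single_apply] at c
lemma KP.ne_1gh (hKP : IsKacPaljutkin k H g h z b) : (1 : H) ≠ g * h := by
  intro e
  have c := KP.coord (hKP := hKP) e 0
  simp [KP.repr_one hKP, KP.repr_gh hKP, Finsupp.single_apply] at c
lemma KP.ne_gh' (hKP : IsKacPaljutkin k H g h z b) : g ≠ h := by
  intro e
  have c := KP.coord (hKP := hKP) e 1
  simp [KP.repr_g hKP, KP.repr_h hKP, Finsupp.single_apply] at c
lemma KP.ne_ggh (hKP : IsKacPaljutkin k H g h z b) : g ≠ g * h := by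
  intro e
  have c := KP.coord (hKP := hKP) e 1
  simp [KP.repr_g hKP, KP.repr_gh hKP, Finsupp.single_apply] at c
lemma KP.ne_hgh (hKP : IsKacPaljutkin k H g h z b) : h ≠ g * h := by
  intro e
  have c := KP.coord (hKP := hKP) e 2
  simp [KP.repr_h hKP, KP.repr_gh hKP, Finsupp.single_apply] at c

/-- kill `h + h = c + g` for any `c ∈ {1,g,h,gh}`. -/
lemma KP.kill1 (hKP : IsKacPaljutkin k H g h z b) {c : H}
    (hc : c = 1 ∨ c = g ∨ c = h ∨ c = g * h) (e : h + h = c + g) : False := by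
  rcases hc with rfl | rfl | rfl | rfl <;>
  · have c2 := KP.coord (hKP := hKP) e 2
    simp [KP.repr_one hKP, KP.repr_g hKP, KP.repr_h hKP, KP.repr_gh hKP,
      Finsupp.single_apply] at c2
    try norm_num at c2

/-- kill `g + h = c + g*h` for any `c ∈ {1,g,h,gh}`. -/
lemma KP.kill2 (hKP : IsKacPaljutkin k H g h z b) {c : H}
    (hc : c = 1 ∨ c = g ∨ c = h ∨ c = g * h) (e : g + h = c + g * h) : False := by
  rcases hc with rfl | rfl | rfl | rfl
  · have c2 := KP.coord (hKP := hKP) e 1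
    simp [KP.repr_one hKP, KP.repr_g hKP, KP.repr_h hKP, KP.repr_gh hKP,
      Finsupp.single_apply] at c2
  · have c2 := KP.coord (hKP := hKP) e 2
    simp [KP.repr_one hKP, KP.repr_g hKP, KP.repr_h hKP, KP.repr_gh hKP,
      Finsupp.single_apply] at c2
  · have c2 := KP.coord (hKP := hKP) e 1
    simp [KP.repr_one hKP, KP.repr_g hKP, KP.repr_h hKP, KP.repr_gh hKP,
      Finsupp.single_apply] at c2
  · have c2 := KP.coord (hKP := hKP) e 1
    simp [KP.repr_one hKP, KP.repr_g hKP, KP.repr_h hKP, KP.repr_gh hKP,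
      Finsupp.single_apply] at c2

lemma half1 {M : Type} [AddCommGroup M] [Module k M] (A B : M) :
    (2 : k)⁻¹ • (A + B + A - B) = A := by
  have e : A + B + A - B = A + A := by abel
  rw [e, ← two_smul k A, smul_smul]
  norm_num

lemma half2 {M : Type} [AddCommGroup M] [Module k M] (A B : M) :
    (2 : k)⁻¹ • (A + A + B - B) = A := by
  have e : A + A + B - B = A + A := by abel
  rw [e, ← two_smul k A, smul_smul]
  norm_num

lemma undouble {M : Type} [AddCommGroup M] [Module k M] {v w : M}
    (e : (2 : k)⁻¹ • v = w) : v = w + w := by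
  have := congrArg (fun t => (2 : k) • t) e
  simp only [smul_smul] at this
  norm_num at this
  rw [this, two_smul]

end Aux6
noncomputable section Aux6b
set_option linter.unusedSectionVars false
set_option maxHeartbeats 2000000
set_option synthInstance.maxHeartbeats 400000
open Coalgebra Bialgebra

variable {k H : Type} [Field k] [CharZero k] [Ring H] [HopfAlgebra k H]
variable {g h z : H} {b : Module.Basis (Fin 8) k H}

lemma KP.killS1 (hKP : IsKacPaljutkin k H g h z b) {c : H}
    (hc : c = 1 ∨ c = g ∨ c = h ∨ c = g * h) (e : g + h + h - c = g + g) : False := by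
  rcases hc with rfl | rfl | rfl | rfl <;>
  · have c2 := KP.coord (hKP := hKP) e 2
    simp [KP.repr_one hKP, KP.repr_g hKP, KP.repr_h hKP, KP.repr_gh hKP,
      Finsupp.single_apply] at c2
    try norm_num at c2

lemma KP.killS3a (hKP : IsKacPaljutkin k H g h z b) {c : H}
    (hc : c = 1 ∨ c = g ∨ c = h ∨ c = g * h)
    (e : g * h + g + h - c = g * h + g * h) : False := by
  rcases hc with rfl | rfl | rfl | rfl
  case inr.inr.inl =>
    have c2 := KP.coord (hKP := hKP) e 1
    simp [KP.repr_one hKP, KP.repr_g hKP, KP.repr_h hKP, KP.repr_gh hKP,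
      Finsupp.single_apply] at c2
  all_goals
    have c2 := KP.coord (hKP := hKP) e 2
    simp [KP.repr_one hKP, KP.repr_g hKP, KP.repr_h hKP, KP.repr_gh hKP,
      Finsupp.single_apply] at c2
    try norm_num at c2

lemma KP.killS3b (hKP : IsKacPaljutkin k H g h z b) {c : H}
    (hc : c = 1 ∨ c = g ∨ c = h ∨ c = g * h)
    (e : g * h + h + g - c = g * h + g * h) : False := by
  rcases hc with rfl | rfl | rfl | rfl
  case inr.inr.inl =>
    have c2 := KP.coord (hKP := hKP) e 1
    simp [KP.repr_one hKP, KP.repr_g hKP, KP.repr_h hKP, KP.repr_gh hKP,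
      Finsupp.single_apply] at c2
  all_goals
    have c2 := KP.coord (hKP := hKP) e 2
    simp [KP.repr_one hKP, KP.repr_g hKP, KP.repr_h hKP, KP.repr_gh hKP,
      Finsupp.single_apply] at c2
    try norm_num at c2

lemma extract {M : Type} [AddCommGroup M] {s w c : M} (e : s + w - c = s) :
    c = w :=
  (add_left_cancel (sub_eq_iff_eq_add.mp e)).symm

end Aux6b
noncomputable section Aux7
set_option linter.unusedSectionVars false
set_option maxHeartbeats 4000000
set_option synthInstance.maxHeartbeats 400000
open Coalgebra Bialgebra

variable {k H : Type} [Field k] [CharZero k] [Ring H] [HopfAlgebra k H]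
variable {g h z : H} {b : Module.Basis (Fin 8) k H} {lact ract : H ⊗[k] H →ₗ[k] H}

lemma KP.left_table (hKP : IsKacPaljutkin k H g h z b)
    (hmp : IsMatchedPairOfActions lact ract)
    (h1 : lact (z ⊗ₜ[k] g) = h) (h2 : lact (z ⊗ₜ[k] h) = g)
    (h3 : lact (z ⊗ₜ[k] (g * h)) = g * h) :
    lact (g ⊗ₜ[k] g) = g ∧ lact (g ⊗ₜ[k] h) = h ∧ lact (g ⊗ₜ[k] (g * h)) = g * h ∧
    lact (h ⊗ₜ[k] g) = g ∧ lact (h ⊗ₜ[k] h) = h ∧ lact (h ⊗ₜ[k] (g * h)) = g * h ∧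
    lact ((g * h) ⊗ₜ[k] g) = g ∧ lact ((g * h) ⊗ₜ[k] h) = h ∧
    lact ((g * h) ⊗ₜ[k] (g * h)) = g * h := by
  have hL := hmp.left
  have cg := hKP.comul_g
  have ch := hKP.comul_h
  have cgh := KP.comul_gh hKP
  have eg := hKP.counit_g
  have eh := hKP.counit_h
  have egh := KP.counit_gh hKP
  have cls : ∀ x y : H, comul (R := k) x = x ⊗ₜ[k] x → comul (R := k) y = y ⊗ₜ[k] y →
      counit (R := k) x = 1 → counit (R := k) y = 1 →
      (lact (x ⊗ₜ[k] y) = 1 ∨ lact (x ⊗ₜ[k] y) = g ∨ lact (x ⊗ₜ[k] y) = h ∨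
        lact (x ⊗ₜ[k] y) = g * h) := by
    intro x y hx hy ex ey
    exact KP.classify hKP (comul_lact hL hx hy)
      (by rw [counit_lact hL, ex, ey, one_mul])
  have act1 : ∀ aa : H, lact ((1 : H) ⊗ₜ[k] aa) = aa := hL.one_act
  have actg1 : lact (g ⊗ₜ[k] (1 : H)) = 1 := by rw [hmp.mp2, hKP.counit_g, one_smul]
  have zsq : ∀ aa : H, lact (z ⊗ₜ[k] lact (z ⊗ₜ[k] aa))
      = (2 : k)⁻¹ • (aa + lact (g ⊗ₜ[k] aa) + lact (h ⊗ₜ[k] aa)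
          - lact ((g * h) ⊗ₜ[k] aa)) := by
    intro aa
    rw [mod_left hL, hKP.z_sq]
    have e : ((2 : k)⁻¹ • (1 + g + h - g * h)) ⊗ₜ[k] aa
        = (2 : k)⁻¹ • ((1 : H) ⊗ₜ[k] aa + g ⊗ₜ[k] aa + h ⊗ₜ[k] aa
            - (g * h) ⊗ₜ[k] aa) := by
      simp [TensorProduct.add_tmul, TensorProduct.sub_tmul, ← TensorProduct.smul_tmul']
    rw [e, map_smul, map_sub, map_add, map_add, act1]
  have conj1 : ∀ aa : H, lact (z ⊗ₜ[k] lact (g ⊗ₜ[k] aa))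
      = lact (h ⊗ₜ[k] lact (z ⊗ₜ[k] aa)) := by
    intro aa
    rw [mod_left hL, mod_left hL, hKP.zg]
  have AA : ∀ aa : H, lact (g ⊗ₜ[k] lact (g ⊗ₜ[k] aa)) = aa := by
    intro aa
    rw [mod_left hL, hKP.g_sq, act1]
  have BA : ∀ aa : H, lact (h ⊗ₜ[k] lact (g ⊗ₜ[k] aa)) = lact ((g * h) ⊗ₜ[k] aa) := by
    intro aa
    rw [mod_left hL, KP.hg hKP]
  -- sum relations
  have S1 : g + lact (g ⊗ₜ[k] g) + lact (h ⊗ₜ[k] g) - lact ((g * h) ⊗ₜ[k] g)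
      = g + g := by
    have e := zsq g
    rw [h1, h2] at e
    exact undouble e.symm
  have S3 : g * h + lact (g ⊗ₜ[k] (g * h)) + lact (h ⊗ₜ[k] (g * h))
      - lact ((g * h) ⊗ₜ[k] (g * h)) = g * h + g * h := by
    have e := zsq (g * h)
    rw [h3, h3] at e
    exact undouble e.symm
  -- case analysis on L g g
  rcases cls g g cg cg eg eg with a1 | a1 | a1 | a1
  · -- L g g = 1 : contradiction
    have e := AA g
    rw [a1, actg1] at e
    exact absurd e (KP.ne_1g hKP)
  pick_goal 2
  · -- L g g = h : contradiction
    have a2 : lact (g ⊗ₜ[k] h) = g := by have e := AA g; rwa [a1] at e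
    have b1 : lact (h ⊗ₜ[k] g) = h := by
      have e := conj1 h
      rw [a2, h1, h2] at e
      exact e.symm
    rw [a1, b1] at S1
    exact absurd S1 (fun e => KP.killS1 hKP (cls (g*h) g cgh cg egh eg) (by
      -- reshape g + h + h - c = g + g
      exact e))
  pick_goal 2
  · -- L g g = g * h : contradiction
    have a3 : lact (g ⊗ₜ[k] (g * h)) = g := by have e := AA g; rwa [a1] at e
    have b3 : lact (h ⊗ₜ[k] (g * h)) = h := by
      have e := conj1 (g * h)
      rw [a3, h1, h3] at e
      exact e.symm
    rw [a3, b3] at S3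
    exact (KP.killS3a hKP (cls (g*h) (g*h) cgh cgh egh egh) S3).elim
  -- main case : L g g = g
  have b2 : lact (h ⊗ₜ[k] h) = h := by
    have e := conj1 g
    rw [a1, h1] at e
    exact e.symm
  rcases cls g h cg ch eg eh with a2 | a2 | a2 | a2
  · have e := AA h
    rw [a2, actg1] at e
    exact absurd e (KP.ne_1h hKP)
  · -- L g h = g : contradiction since then L g g = h
    have e := AA h
    rw [a2, a1] at e
    exact absurd e (KP.ne_gh' hKP)
  pick_goal 2
  · -- L g h = g * h : contradiction
    have a3 : lact (g ⊗ₜ[k] (g * h)) = h := by have e := AA h; rwa [a2] at e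
    have b3 : lact (h ⊗ₜ[k] (g * h)) = g := by
      have e := conj1 (g * h)
      rw [a3, h2, h3] at e
      exact e.symm
    rw [a3, b3] at S3
    exact (KP.killS3b hKP (cls (g*h) (g*h) cgh cgh egh egh) S3).elim
  -- main case : L g h = h
  have b1 : lact (h ⊗ₜ[k] g) = g := by
    have e := conj1 h
    rw [a2, h2] at e
    exact e.symm
  rcases cls g (g * h) cg cgh eg egh with a3 | a3 | a3 | a3
  · have e := AA (g * h)
    rw [a3, actg1] at e
    exact absurd e (KP.ne_1gh hKP)
  · have e := AA (g * h)
    rw [a3, a1] at e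
    exact absurd e (KP.ne_ggh hKP)
  · have e := AA (g * h)
    rw [a3, a2] at e
    exact absurd e (KP.ne_hgh hKP)
  -- main case : L g (g*h) = g*h
  have b3 : lact (h ⊗ₜ[k] (g * h)) = g * h := by
    have e := conj1 (g * h)
    rw [a3, h3] at e
    exact e.symm
  have c1 : lact ((g * h) ⊗ₜ[k] g) = g := by
    have e := BA g
    rw [a1, b1] at e
    exact e.symm
  have c2 : lact ((g * h) ⊗ₜ[k] h) = h := by
    have e := BA h
    rw [a2, b2] at e
    exact e.symm
  have c3 : lact ((g * h) ⊗ₜ[k] (g * h)) = g * h := by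
    have e := BA (g * h)
    rw [a3, b3] at e
    exact e.symm
  exact ⟨a1, a2, a3, b1, b2, b3, c1, c2, c3⟩

end Aux7
noncomputable section Aux8
set_option linter.unusedSectionVars false
set_option maxHeartbeats 4000000
set_option synthInstance.maxHeartbeats 400000
open Coalgebra Bialgebra

variable {k H : Type} [Field k] [CharZero k] [Ring H] [HopfAlgebra k H]
variable {g h z : H} {b : Module.Basis (Fin 8) k H} {lact ract : H ⊗[k] H →ₗ[k] H}

lemma KP.right_table (hKP : IsKacPaljutkin k H g h z b)
    (hmp : IsMatchedPairOfActions lact ract)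
    (h4 : ract (g ⊗ₜ[k] z) = h) (h5 : ract (h ⊗ₜ[k] z) = g)
    (h6 : ract ((g * h) ⊗ₜ[k] z) = g * h) :
    ract (g ⊗ₜ[k] g) = g ∧ ract (g ⊗ₜ[k] h) = g ∧ ract (g ⊗ₜ[k] (g * h)) = g ∧
    ract (h ⊗ₜ[k] g) = h ∧ ract (h ⊗ₜ[k] h) = h ∧ ract (h ⊗ₜ[k] (g * h)) = h ∧
    ract ((g * h) ⊗ₜ[k] g) = g * h ∧ ract ((g * h) ⊗ₜ[k] h) = g * h ∧
    ract ((g * h) ⊗ₜ[k] (g * h)) = g * h := by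
  have hR := hmp.right
  have cg := hKP.comul_g
  have ch := hKP.comul_h
  have cgh := KP.comul_gh hKP
  have eg := hKP.counit_g
  have eh := hKP.counit_h
  have egh := KP.counit_gh hKP
  have cls : ∀ x y : H, comul (R := k) x = x ⊗ₜ[k] x → comul (R := k) y = y ⊗ₜ[k] y →
      counit (R := k) x = 1 → counit (R := k) y = 1 →
      (ract (x ⊗ₜ[k] y) = 1 ∨ ract (x ⊗ₜ[k] y) = g ∨ ract (x ⊗ₜ[k] y) = h ∨
        ract (x ⊗ₜ[k] y) = g * h) := by
    intro x y hx hy ex ey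
    exact KP.classify hKP (comul_ract hR hx hy)
      (by rw [counit_ract hR, ex, ey, one_mul])
  have ract1 : ∀ x : H, ract (x ⊗ₜ[k] (1 : H)) = x := hR.act_one
  have ract1g : ract ((1 : H) ⊗ₜ[k] g) = 1 := by rw [hmp.mp4, hKP.counit_g, one_smul]
  have ract1z : ract ((1 : H) ⊗ₜ[k] z) = 1 := by rw [hmp.mp4, hKP.counit_z, one_smul]
  have rzsq : ∀ x : H, ract (ract (x ⊗ₜ[k] z) ⊗ₜ[k] z)
      = (2 : k)⁻¹ • (x + ract (x ⊗ₜ[k] g) + ract (x ⊗ₜ[k] h)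
          - ract (x ⊗ₜ[k] (g * h))) := by
    intro x
    rw [mod_right hR, hKP.z_sq]
    have e : x ⊗ₜ[k] ((2 : k)⁻¹ • (1 + g + h - g * h))
        = (2 : k)⁻¹ • (x ⊗ₜ[k] (1 : H) + x ⊗ₜ[k] g + x ⊗ₜ[k] h
            - x ⊗ₜ[k] (g * h)) := by
      simp [TensorProduct.tmul_add, TensorProduct.tmul_sub, TensorProduct.tmul_smul]
    rw [e, map_smul, map_sub, map_add, map_add, ract1]
  have conjR : ∀ x : H, ract (ract (x ⊗ₜ[k] g) ⊗ₜ[k] z)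
      = ract (ract (x ⊗ₜ[k] z) ⊗ₜ[k] h) := by
    intro x
    rw [mod_right hR, mod_right hR, hKP.zh]
  have conj1R : ∀ x : H, ract (ract (x ⊗ₜ[k] h) ⊗ₜ[k] z)
      = ract (ract (x ⊗ₜ[k] z) ⊗ₜ[k] g) := by
    intro x
    rw [mod_right hR, mod_right hR, hKP.zg]
  have involR : ∀ x : H, ract (ract (x ⊗ₜ[k] g) ⊗ₜ[k] g) = x := by
    intro x
    rw [mod_right hR, hKP.g_sq, ract1]
  have involRh : ∀ x : H, ract (ract (x ⊗ₜ[k] h) ⊗ₜ[k] h) = x := by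
    intro x
    rw [mod_right hR, hKP.h_sq, ract1]
  have SR1 : g + ract (g ⊗ₜ[k] g) + ract (g ⊗ₜ[k] h) - ract (g ⊗ₜ[k] (g * h))
      = g + g := by
    have e := rzsq g
    rw [h4, h5] at e
    exact undouble e.symm
  have SR2 : h + ract (h ⊗ₜ[k] g) + ract (h ⊗ₜ[k] h) - ract (h ⊗ₜ[k] (g * h))
      = h + h := by
    have e := rzsq h
    rw [h5, h4] at e
    exact undouble e.symm
  have SR3 : g * h + ract ((g * h) ⊗ₜ[k] g) + ract ((g * h) ⊗ₜ[k] h)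
      - ract ((g * h) ⊗ₜ[k] (g * h)) = g * h + g * h := by
    have e := rzsq (g * h)
    rw [h6, h6] at e
    exact undouble e.symm
  rcases cls g g cg cg eg eg with r1 | r1 | r1 | r1
  · have e := involR g
    rw [r1, ract1g] at e
    exact absurd e (KP.ne_1g hKP)
  pick_goal 2
  · -- R g g = h
    have q1 : ract (h ⊗ₜ[k] g) = g := by have e := involR g; rwa [r1] at e
    have q2 : ract (g ⊗ₜ[k] h) = h := by
      have e := conjR h
      rw [q1, h4, h5] at e
      exact e.symm
    rw [r1, q2] at SR1
    exact (KP.killS1 hKP (cls g (g*h) cg cgh eg egh) SR1).elim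
  pick_goal 2
  · -- R g g = g * h
    have q1 : ract ((g * h) ⊗ₜ[k] g) = g := by have e := involR g; rwa [r1] at e
    have phh : ract (h ⊗ₜ[k] h) = g * h := by
      have e := conjR g
      rw [r1, h6, h4] at e
      exact e.symm
    have q2 : ract ((g * h) ⊗ₜ[k] h) = h := by have e := involRh h; rwa [phh] at e
    rw [q1, q2] at SR3
    exact (KP.killS3a hKP (cls (g*h) (g*h) cgh cgh egh egh) SR3).elim
  -- main: R g g = g
  have p2 : ract (h ⊗ₜ[k] h) = h := by
    have e := conjR g
    rw [r1, h4] at e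
    exact e.symm
  rcases cls h g ch cg eh eg with r2 | r2 | r2 | r2
  · have e := involR h
    rw [r2, ract1g] at e
    exact absurd e (KP.ne_1h hKP)
  · have e := involR h
    rw [r2, r1] at e
    exact absurd e (KP.ne_gh' hKP)
  pick_goal 2
  · -- R h g = g * h
    have q2 : ract (g ⊗ₜ[k] h) = g * h := by
      have e := conjR h
      rw [r2, h6, h5] at e
      exact e.symm
    have q4 : ract ((g * h) ⊗ₜ[k] g) = h := by have e := involR h; rwa [r2] at e
    have e := conj1R (g * h)
    rw [h6, q4] at e
    rcases cls (g*h) h cgh ch egh eh with v | v | v | v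
    · rw [v, ract1z] at e
      exact absurd e (KP.ne_1h hKP)
    · rw [v, h4] at e
      rw [q4, v] at SR3
      exact (KP.killS3b hKP (cls (g*h) (g*h) cgh cgh egh egh) SR3).elim
    · rw [v, h5] at e
      exact absurd e (KP.ne_gh' hKP)
    · rw [v, h6] at e
      exact absurd e.symm (KP.ne_hgh hKP)
  -- main: R h g = h
  have p1 : ract (g ⊗ₜ[k] h) = g := by
    have e := conjR h
    rw [r2, h5] at e
    exact e.symm
  have q3 : ract (g ⊗ₜ[k] (g * h)) = g := by
    rw [r1, p1] at SR1
    exact extract SR1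
  have q3h : ract (h ⊗ₜ[k] (g * h)) = h := by
    rw [r2, p2] at SR2
    exact extract SR2
  rcases cls (g*h) g cgh cg egh eg with r3 | r3 | r3 | r3
  · have e := involR (g * h)
    rw [r3, ract1g] at e
    exact absurd e (KP.ne_1gh hKP)
  · have e := involR (g * h)
    rw [r3, r1] at e
    exact absurd e (KP.ne_ggh hKP)
  · have e := involR (g * h)
    rw [r3, r2] at e
    exact absurd e (KP.ne_hgh hKP)
  -- main : R gh g = gh
  have p3 : ract ((g * h) ⊗ₜ[k] h) = g * h := by
    have e := conjR (g * h)
    rw [r3, h6] at e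
    exact e.symm
  have q3gh : ract ((g * h) ⊗ₜ[k] (g * h)) = g * h := by
    rw [r3, p3] at SR3
    exact extract SR3
  exact ⟨r1, p1, q3, r2, p2, q3h, r3, p3, q3gh⟩

end Aux8
noncomputable section Aux9
set_option linter.unusedSectionVars false
set_option maxHeartbeats 4000000
set_option synthInstance.maxHeartbeats 400000
open Coalgebra Bialgebra

variable {k H : Type} [Field k] [CharZero k] [Ring H] [HopfAlgebra k H]
variable {g h z : H} {b : Module.Basis (Fin 8) k H} {lact ract : H ⊗[k] H →ₗ[k] H}

lemma KP.cancel_g (hKP : IsKacPaljutkin k H g h z b) {u v : H} (e : g * u = g * v) :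
    u = v := by
  have e2 := congrArg (fun t => g * t) e
  simpa [KP.gg' hKP] using e2
lemma KP.cancel_h (hKP : IsKacPaljutkin k H g h z b) {u v : H} (e : h * u = h * v) :
    u = v := by
  have e2 := congrArg (fun t => h * t) e
  simpa [KP.hh' hKP] using e2
lemma KP.cancel_gh (hKP : IsKacPaljutkin k H g h z b) {u v : H}
    (e : g * h * u = g * h * v) : u = v := by
  have e2 := congrArg (fun t => h * (g * t)) e
  simpa [mul_assoc, KP.gg' hKP, KP.hh' hKP] using e2
lemma KP.zgh (hKP : IsKacPaljutkin k H g h z b) : z * (g * h) = g * h * z := by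
  rw [KP.zg' hKP, hKP.zh, KP.hg' hKP, mul_assoc]

lemma KP.zcol (hKP : IsKacPaljutkin k H g h z b)
    (hmp : IsMatchedPairOfActions lact ract)
    (h1 : lact (z ⊗ₜ[k] g) = h) (h2 : lact (z ⊗ₜ[k] h) = g)
    (h3 : lact (z ⊗ₜ[k] (g * h)) = g * h)
    (h4 : ract (g ⊗ₜ[k] z) = h) (h5 : ract (h ⊗ₜ[k] z) = g)
    (h6 : ract ((g * h) ⊗ₜ[k] z) = g * h) :
    ract (z ⊗ₜ[k] g) = z ∧ ract (z ⊗ₜ[k] h) = z ∧ ract (z ⊗ₜ[k] (g * h)) = z ∧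
    ract ((h * z) ⊗ₜ[k] g) = h * z ∧ ract ((h * z) ⊗ₜ[k] h) = h * z ∧
    ract ((h * z) ⊗ₜ[k] (g * h)) = h * z := by
  have hL := hmp.left
  have hR := hmp.right
  have cg := hKP.comul_g
  have ch := hKP.comul_h
  have cgh := KP.comul_gh hKP
  obtain ⟨a1, a2, a3, b1, b2, b3, c1, c2, c3⟩ := KP.left_table hKP hmp h1 h2 h3
  obtain ⟨r1, p1, q1, r2, p2, q2, r3, p3, q3⟩ := KP.right_table hKP hmp h4 h5 h6
  -- column at g
  have hz_g : ract ((h * z) ⊗ₜ[k] g) = h * ract (z ⊗ₜ[k] g) := by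
    have E := mp3_z_gl (g := g) (h := h) hmp hKP.comul_z cg h
    rw [h1, ← mod_left hL g z g, h1, a2, p2, half2] at E
    exact E
  have z_g : ract (z ⊗ₜ[k] g) = z := by
    have E := factor_z_gl (g := g) (h := h) hmp hKP.comul_z cg
    rw [h1, ← mod_left hL g z g, h1, a2, hz_g, half2, hKP.zg] at E
    exact (KP.cancel_h hKP E).symm
  -- column at h
  have hz_h : ract ((h * z) ⊗ₜ[k] h) = h * ract (z ⊗ₜ[k] h) := by
    have E := mp3_z_gl (g := g) (h := h) hmp hKP.comul_z ch h
    rw [h2, ← mod_left hL g z h, h2, a1, r2, half2] at E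
    exact E
  have z_h : ract (z ⊗ₜ[k] h) = z := by
    have E := factor_z_gl (g := g) (h := h) hmp hKP.comul_z ch
    rw [h2, ← mod_left hL g z h, h2, a1, hz_h, half2, hKP.zh] at E
    exact (KP.cancel_g hKP E).symm
  -- column at g*h
  have hz_gh : ract ((h * z) ⊗ₜ[k] (g * h)) = h * ract (z ⊗ₜ[k] (g * h)) := by
    have E := mp3_z_gl (g := g) (h := h) hmp hKP.comul_z cgh h
    rw [h3, ← mod_left hL g z (g * h), h3, a3, q2, half2] at E
    exact E
  have z_gh : ract (z ⊗ₜ[k] (g * h)) = z := by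
    have E := factor_z_gl (g := g) (h := h) hmp hKP.comul_z cgh
    rw [h3, ← mod_left hL g z (g * h), h3, a3, hz_gh, half2, KP.zgh hKP, mul_assoc] at E
    exact (KP.cancel_gh hKP (by rw [← mul_assoc] at E; exact E)).symm
  exact ⟨z_g, z_h, z_gh, by rw [hz_g, z_g], by rw [hz_h, z_h], by rw [hz_gh, z_gh]⟩

lemma KP.gl_z (hKP : IsKacPaljutkin k H g h z b)
    (hmp : IsMatchedPairOfActions lact ract)
    (h1 : lact (z ⊗ₜ[k] g) = h) (h2 : lact (z ⊗ₜ[k] h) = g)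
    (h3 : lact (z ⊗ₜ[k] (g * h)) = g * h)
    (h4 : ract (g ⊗ₜ[k] z) = h) (h5 : ract (h ⊗ₜ[k] z) = g)
    (h6 : ract ((g * h) ⊗ₜ[k] z) = g * h) :
    lact (g ⊗ₜ[k] z) = z ∧ lact (h ⊗ₜ[k] z) = z ∧ lact ((g * h) ⊗ₜ[k] z) = z := by
  have hL := hmp.left
  have hR := hmp.right
  have cg := hKP.comul_g
  have ch := hKP.comul_h
  have cgh := KP.comul_gh hKP
  obtain ⟨a1, a2, a3, b1, b2, b3, c1, c2, c3⟩ := KP.left_table hKP hmp h1 h2 h3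
  obtain ⟨r1, p1, q1, r2, p2, q2, r3, p3, q3⟩ := KP.right_table hKP hmp h4 h5 h6
  constructor
  · have E := factor_gl_z (g := g) (h := h) hmp hKP.comul_z cg
    rw [mp1_gl_gl hmp cg cg z, a1, r1, h4, ← mod_right hR g h z, p1, h4, half1] at E
    have e2 := congrArg (fun t => t * h) E
    simp only [mul_assoc, hKP.h_sq, mul_one, hKP.zh, KP.gg' hKP] at e2
    exact e2.symm
  constructor
  · have E := factor_gl_z (g := g) (h := h) hmp hKP.comul_z ch
    rw [mp1_gl_gl hmp ch cg z, b1, r2, h5, ← mod_right hR h h z, p2, h5, half1] at E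
    have e2 := congrArg (fun t => t * g) E
    simp only [mul_assoc, hKP.g_sq, mul_one, hKP.zg, KP.hh' hKP] at e2
    exact e2.symm
  · have E := factor_gl_z (g := g) (h := h) hmp hKP.comul_z cgh
    rw [mp1_gl_gl hmp cgh cg z, c1, r3, h6, ← mod_right hR (g * h) h z, p3, h6, half1] at E
    have e2 := congrArg (fun t => t * (g * h)) E
    simp only [mul_assoc, hKP.g_sq, hKP.h_sq, mul_one, KP.hg' hKP, KP.gg' hKP,
      KP.hh' hKP, hKP.zg, hKP.zh, KP.zg' hKP, KP.zh' hKP] at e2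
    exact e2.symm

end Aux9
/-- In Situation 2 (`z` swaps `g` and `h` on both sides), the left action is determined
by `z ⇀ z` as in Eq. (11) of the paper. -/
theorem situation2_left_action_table {k H : Type} [Field k] [CharZero k] [IsAlgClosed k]
    [Ring H] [HopfAlgebra k H] (g h z : H) (b : Module.Basis (Fin 8) k H)
    (hKP : IsKacPaljutkin k H g h z b)
    (lact ract : H ⊗[k] H →ₗ[k] H) (hmp : IsMatchedPairOfActions lact ract)
    (h1 : lact (z ⊗ₜ[k] g) = h) (h2 : lact (z ⊗ₜ[k] h) = g)
    (h3 : lact (z ⊗ₜ[k] (g * h)) = g * h)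
    (h4 : ract (g ⊗ₜ[k] z) = h) (h5 : ract (h ⊗ₜ[k] z) = g)
    (h6 : ract ((g * h) ⊗ₜ[k] z) = g * h) :
    (lact (g ⊗ₜ[k] z) = z ∧ lact (h ⊗ₜ[k] z) = z ∧ lact ((g * h) ⊗ₜ[k] z) = z) ∧
    (lact ((g * z) ⊗ₜ[k] z) = lact (z ⊗ₜ[k] z) ∧
      lact ((h * z) ⊗ₜ[k] z) = lact (z ⊗ₜ[k] z) ∧
      lact ((g * h * z) ⊗ₜ[k] z) = lact (z ⊗ₜ[k] z)) ∧
    (lact (z ⊗ₜ[k] (h * z)) = g * lact (z ⊗ₜ[k] z) ∧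
      lact ((g * z) ⊗ₜ[k] (h * z)) = g * lact (z ⊗ₜ[k] z) ∧
      lact ((h * z) ⊗ₜ[k] (h * z)) = g * lact (z ⊗ₜ[k] z) ∧
      lact ((g * h * z) ⊗ₜ[k] (h * z)) = g * lact (z ⊗ₜ[k] z)) ∧
    (lact (z ⊗ₜ[k] (g * z)) = h * lact (z ⊗ₜ[k] z) ∧
      lact ((g * z) ⊗ₜ[k] (g * z)) = h * lact (z ⊗ₜ[k] z) ∧
      lact ((h * z) ⊗ₜ[k] (g * z)) = h * lact (z ⊗ₜ[k] z) ∧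
      lact ((g * h * z) ⊗ₜ[k] (g * z)) = h * lact (z ⊗ₜ[k] z)) ∧
    (lact (z ⊗ₜ[k] (g * h * z)) = g * h * lact (z ⊗ₜ[k] z) ∧
      lact ((g * z) ⊗ₜ[k] (g * h * z)) = g * h * lact (z ⊗ₜ[k] z) ∧
      lact ((h * z) ⊗ₜ[k] (g * h * z)) = g * h * lact (z ⊗ₜ[k] z) ∧
      lact ((g * h * z) ⊗ₜ[k] (g * h * z)) = g * h * lact (z ⊗ₜ[k] z)) := by

  classical
  have hL := hmp.left
  have hR := hmp.right
  have cg := hKP.comul_g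
  have ch := hKP.comul_h
  have cgh := KP.comul_gh hKP
  obtain ⟨a1, a2, a3, b1, b2, b3, c1, c2, c3⟩ := KP.left_table hKP hmp h1 h2 h3
  obtain ⟨r1, p1, q1, r2, p2, q2, r3, p3, q3⟩ := KP.right_table hKP hmp h4 h5 h6
  obtain ⟨z_g, z_h, z_gh, hz_g, hz_h, hz_gh⟩ := KP.zcol hKP hmp h1 h2 h3 h4 h5 h6
  obtain ⟨G1g, G1h, G1gh⟩ := KP.gl_z hKP hmp h1 h2 h3 h4 h5 h6
  -- group 2 : (xz) ⇀ z = z ⇀ z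
  have E_hz : lact ((h * z) ⊗ₜ[k] z) = lact (z ⊗ₜ[k] z) := by
    have e := (mod_left hL z g z).symm
    rw [hKP.zg, G1g] at e
    exact e
  have E_gz : lact ((g * z) ⊗ₜ[k] z) = lact (z ⊗ₜ[k] z) := by
    have e := (mod_left hL z h z).symm
    rw [hKP.zh, G1h] at e
    exact e
  have E_ghz : lact ((g * h * z) ⊗ₜ[k] z) = lact (z ⊗ₜ[k] z) := by
    have e := (mod_left hL z (g * h) z).symm
    rw [KP.zgh hKP, G1gh] at e
    exact e
  -- stability of w := z ⇀ z under the group actions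
  have Gw : lact (g ⊗ₜ[k] lact (z ⊗ₜ[k] z)) = lact (z ⊗ₜ[k] z) := by
    rw [mod_left hL]; exact E_gz
  have Hw : lact (h ⊗ₜ[k] lact (z ⊗ₜ[k] z)) = lact (z ⊗ₜ[k] z) := by
    rw [mod_left hL]; exact E_hz
  have GHw : lact ((g * h) ⊗ₜ[k] lact (z ⊗ₜ[k] z)) = lact (z ⊗ₜ[k] z) := by
    rw [mod_left hL]; exact E_ghz
  -- group 3 : ⇀ (h*z)
  have Z_hz : lact (z ⊗ₜ[k] (h * z)) = g * lact (z ⊗ₜ[k] z) := by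
    have E := mp1_z_gl (g := g) (h := h) hmp hKP.comul_z ch z
    rw [← mod_left hL g z h, h2, a1, z_h, hz_h, E_hz, half2] at E
    exact E
  have Gz_hz : lact ((g * z) ⊗ₜ[k] (h * z)) = g * lact (z ⊗ₜ[k] z) := by
    have e := (mod_left hL g z (h * z)).symm
    rw [Z_hz, mp1_gl_gl hmp cg cg (lact (z ⊗ₜ[k] z)), a1, r1, Gw] at e
    exact e
  have Hz_hz : lact ((h * z) ⊗ₜ[k] (h * z)) = g * lact (z ⊗ₜ[k] z) := by
    have e := (mod_left hL h z (h * z)).symm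
    rw [Z_hz, mp1_gl_gl hmp ch cg (lact (z ⊗ₜ[k] z)), b1, r2, Hw] at e
    exact e
  have Ghz_hz : lact ((g * h * z) ⊗ₜ[k] (h * z)) = g * lact (z ⊗ₜ[k] z) := by
    have e := (mod_left hL (g * h) z (h * z)).symm
    rw [Z_hz, mp1_gl_gl hmp cgh cg (lact (z ⊗ₜ[k] z)), c1, r3, GHw] at e
    exact e
  -- group 4 : ⇀ (g*z)
  have Z_gz : lact (z ⊗ₜ[k] (g * z)) = h * lact (z ⊗ₜ[k] z) := by
    have E := mp1_z_gl (g := g) (h := h) hmp hKP.comul_z cg z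
    rw [← mod_left hL g z g, h1, a2, z_g, hz_g, E_hz, half2] at E
    exact E
  have Gz_gz : lact ((g * z) ⊗ₜ[k] (g * z)) = h * lact (z ⊗ₜ[k] z) := by
    have e := (mod_left hL g z (g * z)).symm
    rw [Z_gz, mp1_gl_gl hmp cg ch (lact (z ⊗ₜ[k] z)), a2, p1, Gw] at e
    exact e
  have Hz_gz : lact ((h * z) ⊗ₜ[k] (g * z)) = h * lact (z ⊗ₜ[k] z) := by
    have e := (mod_left hL h z (g * z)).symm
    rw [Z_gz, mp1_gl_gl hmp ch ch (lact (z ⊗ₜ[k] z)), b2, p2, Hw] at e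
    exact e
  have Ghz_gz : lact ((g * h * z) ⊗ₜ[k] (g * z)) = h * lact (z ⊗ₜ[k] z) := by
    have e := (mod_left hL (g * h) z (g * z)).symm
    rw [Z_gz, mp1_gl_gl hmp cgh ch (lact (z ⊗ₜ[k] z)), c2, p3, GHw] at e
    exact e
  -- group 5 : ⇀ (g*h*z)
  have Z_ghz : lact (z ⊗ₜ[k] (g * h * z)) = g * h * lact (z ⊗ₜ[k] z) := by
    have E := mp1_z_gl (g := g) (h := h) hmp hKP.comul_z cgh z
    rw [← mod_left hL g z (g * h), h3, a3, z_gh, hz_gh, E_hz, half2] at E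
    exact E
  have Gz_ghz : lact ((g * z) ⊗ₜ[k] (g * h * z)) = g * h * lact (z ⊗ₜ[k] z) := by
    have e := (mod_left hL g z (g * h * z)).symm
    rw [Z_ghz, mp1_gl_gl hmp cg cgh (lact (z ⊗ₜ[k] z)), a3, q1, Gw] at e
    exact e
  have Hz_ghz : lact ((h * z) ⊗ₜ[k] (g * h * z)) = g * h * lact (z ⊗ₜ[k] z) := by
    have e := (mod_left hL h z (g * h * z)).symm
    rw [Z_ghz, mp1_gl_gl hmp ch cgh (lact (z ⊗ₜ[k] z)), b3, q2, Hw] at e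
    exact e
  have Ghz_ghz : lact ((g * h * z) ⊗ₜ[k] (g * h * z)) = g * h * lact (z ⊗ₜ[k] z) := by
    have e := (mod_left hL (g * h) z (g * h * z)).symm
    rw [Z_ghz, mp1_gl_gl hmp cgh cgh (lact (z ⊗ₜ[k] z)), c3, q3, GHw] at e
    exact e
  exact ⟨⟨G1g, G1h, G1gh⟩, ⟨E_gz, E_hz, E_ghz⟩,
    ⟨Z_hz, Gz_hz, Hz_hz, Ghz_hz⟩, ⟨Z_gz, Gz_gz, Hz_gz, Ghz_gz⟩,
    ⟨Z_ghz, Gz_ghz, Hz_ghz, Ghz_ghz⟩⟩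
end

section
/- Neither the Case 2.1 pair nor the Case 2.2 pair of actions on the Kac–Paljutkin algebra H_8 is induced by a coquasitriangular structure: for each of these two matched pairs (⇀, ↼), there exists no coquasitriangular structure ℛ on H_8 such that a ⇀ b = ℛ⁻¹(a₁⊗b₁) b₂ ℛ(a₂⊗b₃) and a ↼ b = ℛ⁻¹(a₁⊗b₁) a₂ ℛ(a₃⊗b₂) for all a, b ∈ H_8. -/
open TensorProduct

noncomputable section

variable (k H : Type) [Field k] [Ring H] [HopfAlgebra k H]

/-- Convolution product of two linear forms on the coalgebra `H ⊗ H`. -/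
def convProd (φ ψ : H ⊗[k] H →ₗ[k] k) : H ⊗[k] H →ₗ[k] k :=
  LinearMap.mul' k k ∘ₗ TensorProduct.map φ ψ ∘ₗ sweedler2 k H

/-- The counit of the coalgebra `H ⊗ H`, the unit for convolution. -/
def convUnit : H ⊗[k] H →ₗ[k] k :=
  (TensorProduct.lid k k).toLinearMap ∘ₗ
    TensorProduct.map Coalgebra.counit Coalgebra.counit

variable {k H}

/-- `R` is a coquasitriangular structure on the Hopf algebra `H`, with convolution
inverse `Rinv`. -/
structure IsCoquasitriangular (R Rinv : H ⊗[k] H →ₗ[k] k) : Prop where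
  conv_inv_right : convProd k H R Rinv = convUnit k H
  conv_inv_left : convProd k H Rinv R = convUnit k H
  /-- `R(a₁ ⊗ b₁)a₂b₂ = b₁a₁R(a₂ ⊗ b₂)` -/
  cqt1 : (TensorProduct.lid k H).toLinearMap ∘ₗ
      TensorProduct.map R (LinearMap.mul' k H) ∘ₗ sweedler2 k H
    = (TensorProduct.rid k H).toLinearMap ∘ₗ
        TensorProduct.map
          (LinearMap.mul' k H ∘ₗ (TensorProduct.comm k H H).toLinearMap) R ∘ₗ
        sweedler2 k H
  /-- `R(a ⊗ bc) = R(a₁ ⊗ c)R(a₂ ⊗ b)` -/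
  cqt2 : R ∘ₗ TensorProduct.map LinearMap.id (LinearMap.mul' k H)
    = LinearMap.mul' k k ∘ₗ TensorProduct.map R R ∘ₗ
        (TensorProduct.tensorTensorTensorComm k H H H H).toLinearMap ∘ₗ
        TensorProduct.map Coalgebra.comul LinearMap.id ∘ₗ
        TensorProduct.map LinearMap.id (TensorProduct.comm k H H).toLinearMap
  /-- `R(ab ⊗ c) = R(a ⊗ c₁)R(b ⊗ c₂)` -/
  cqt3 : R ∘ₗ TensorProduct.map (LinearMap.mul' k H) LinearMap.id
    = LinearMap.mul' k k ∘ₗ TensorProduct.map R R ∘ₗ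
        (TensorProduct.tensorTensorTensorComm k H H H H).toLinearMap ∘ₗ
        TensorProduct.map LinearMap.id Coalgebra.comul

variable (k H)

/-- `x ⊗ y ↦ Σ R(x₁ ⊗ y₁) • (x₂ ⊗ y₂)`. -/
def cqtStep (R : H ⊗[k] H →ₗ[k] k) : H ⊗[k] H →ₗ[k] H ⊗[k] H :=
  (TensorProduct.lid k (H ⊗[k] H)).toLinearMap ∘ₗ
    TensorProduct.map R LinearMap.id ∘ₗ sweedler2 k H

/-- The left action `a ⇀ b = R⁻¹(a₁ ⊗ b₁) b₂ R(a₂ ⊗ b₃)` induced by a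
coquasitriangular structure. -/
def cqtLeftAction (R Rinv : H ⊗[k] H →ₗ[k] k) : H ⊗[k] H →ₗ[k] H :=
  ((TensorProduct.rid k H).toLinearMap ∘ₗ
    TensorProduct.map LinearMap.id R ∘ₗ
    (TensorProduct.leftComm k H H H).toLinearMap ∘ₗ
    TensorProduct.map LinearMap.id Coalgebra.comul) ∘ₗ
  cqtStep k H Rinv

/-- The right action `a ↼ b = R⁻¹(a₁ ⊗ b₁) a₂ R(a₃ ⊗ b₂)` induced by a
coquasitriangular structure. -/
def cqtRightAction (R Rinv : H ⊗[k] H →ₗ[k] k) : H ⊗[k] H →ₗ[k] H :=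
  ((TensorProduct.rid k H).toLinearMap ∘ₗ
    TensorProduct.map LinearMap.id R ∘ₗ
    (TensorProduct.assoc k H H H).toLinearMap ∘ₗ
    TensorProduct.map Coalgebra.comul LinearMap.id) ∘ₗ
  cqtStep k H Rinv

end
noncomputable section

variable (k H : Type) [Field k] [Ring H] [HopfAlgebra k H]

/-- The linear form returning the sum of the coordinates on `1, g, h, gh`. -/
def grpCoeff (b : Module.Basis (Fin 8) k H) : H →ₗ[k] k :=
  b.coord 0 + b.coord 1 + b.coord 2 + b.coord 3

/-- The linear form returning the sum of the coordinates on `z, gz, hz, ghz`. -/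
def zptCoeff (b : Module.Basis (Fin 8) k H) : H →ₗ[k] k :=
  b.coord 4 + b.coord 5 + b.coord 6 + b.coord 7

/-- The left action `x ⇀ y` which is `y` for `x ∈ {1, g, h, gh}` and `φ(y)` for
`x ∈ {z, gz, hz, ghz}`, extended bilinearly. -/
def caseLeftAction (b : Module.Basis (Fin 8) k H) (φ : H →ₗ[k] H) : H ⊗[k] H →ₗ[k] H :=
  (TensorProduct.lid k H).toLinearMap ∘ₗ
      TensorProduct.map (grpCoeff k H b) LinearMap.id
    + (TensorProduct.lid k H).toLinearMap ∘ₗ TensorProduct.map (zptCoeff k H b) φ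

/-- The right action `y ↼ x` which is `y` for `x ∈ {1, g, h, gh}` and `φ(y)` for
`x ∈ {z, gz, hz, ghz}`, extended bilinearly. -/
def caseRightAction (b : Module.Basis (Fin 8) k H) (φ : H →ₗ[k] H) : H ⊗[k] H →ₗ[k] H :=
  caseLeftAction k H b φ ∘ₗ (TensorProduct.comm k H H).toLinearMap

/-- The map `φ` of Case 2.1: `φ(1) = 1`, `φ(g) = h`, `φ(h) = g`, `φ(gh) = gh`,
`φ(z) = z³`, `φ(gz) = hz³`, `φ(hz) = gz³`, `φ(ghz) = ghz³`. -/
def case21Map (g h z : H) (b : Module.Basis (Fin 8) k H) : H →ₗ[k] H :=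
  b.constr k ![1, h, g, g * h, zCubed k g h z,
    h * zCubed k g h z, g * zCubed k g h z, g * h * zCubed k g h z]

/-- The map `ψ` of Case 2.2: `ψ(1) = 1`, `ψ(g) = h`, `ψ(h) = g`, `ψ(gh) = gh`,
`ψ(z) = ghz³`, `ψ(gz) = gz³`, `ψ(hz) = hz³`, `ψ(ghz) = z³`. -/
def case22Map (g h z : H) (b : Module.Basis (Fin 8) k H) : H →ₗ[k] H :=
  b.constr k ![1, h, g, g * h, g * h * zCubed k g h z,
    g * zCubed k g h z, h * zCubed k g h z, zCubed k g h z]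

end
section Aux

variable {k H : Type} [Field k] [Ring H] [HopfAlgebra k H]

lemma caseLeft_z_g (g h z : H) (b : Module.Basis (Fin 8) k H)
    (hKP : IsKacPaljutkin k H g h z b) (φ : H →ₗ[k] H) :
    caseLeftAction k H b φ (z ⊗ₜ[k] g) = φ g := by
  have hz : z = b 4 := by rw [hKP.basis_eq]; rfl
  simp only [caseLeftAction, grpCoeff, zptCoeff, LinearMap.add_apply, LinearMap.comp_apply,
    TensorProduct.map_tmul, LinearEquiv.coe_coe, TensorProduct.lid_tmul, LinearMap.id_coe,
    id_eq, Module.Basis.coord_apply, hz, Module.Basis.repr_self]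
  simp [Finsupp.single_apply]

lemma cqt_left_z_g (g h z : H) (b : Module.Basis (Fin 8) k H)
    (hKP : IsKacPaljutkin k H g h z b) (R Rinv : H ⊗[k] H →ₗ[k] k)
    (hcqt : IsCoquasitriangular R Rinv) :
    cqtLeftAction k H R Rinv (z ⊗ₜ[k] g) = g := by
  have hconv : convProd k H Rinv R (z ⊗ₜ[k] g) = 1 := by
    rw [hcqt.conv_inv_left]
    simp [convUnit, hKP.counit_z, hKP.counit_g]
  have key : cqtLeftAction k H R Rinv (z ⊗ₜ[k] g)
      = convProd k H Rinv R (z ⊗ₜ[k] g) • g := by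
    simp only [cqtLeftAction, cqtStep, convProd, sweedler2, LinearMap.comp_apply,
      TensorProduct.map_tmul, hKP.comul_z, hKP.comul_g, LinearEquiv.coe_coe]
    simp [TensorProduct.tmul_add, TensorProduct.add_tmul, TensorProduct.tmul_sub,
      TensorProduct.sub_tmul, TensorProduct.smul_tmul', TensorProduct.tmul_smul,
      hKP.comul_g, hKP.comul_z, smul_smul, mul_comm, add_smul, sub_smul, smul_sub, smul_add]
    simp only [← TensorProduct.smul_tmul', map_smul, smul_eq_mul, smul_smul]
    module
  rw [key, hconv, one_smul]

lemma not_from_cqt (g h z : H) (b : Module.Basis (Fin 8) k H)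
    (hKP : IsKacPaljutkin k H g h z b) (φ : H →ₗ[k] H) (hφ : φ g = h) :
    ¬ ∃ R Rinv : H ⊗[k] H →ₗ[k] k, IsCoquasitriangular R Rinv ∧
        caseLeftAction k H b φ = cqtLeftAction k H R Rinv ∧
        caseRightAction k H b φ = cqtRightAction k H R Rinv := by
  rintro ⟨R, Rinv, hcqt, hL, -⟩
  have e := LinearMap.congr_fun hL (z ⊗ₜ[k] g)
  rw [caseLeft_z_g g h z b hKP φ, cqt_left_z_g g h z b hKP R Rinv hcqt, hφ] at e
  have h1 : h = b 2 := by rw [hKP.basis_eq]; rfl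
  have h2 : g = b 1 := by rw [hKP.basis_eq]; rfl
  rw [h1, h2] at e
  exact absurd (b.injective e) (by decide)

end Aux
/-- Neither the Case 2.1 pair nor the Case 2.2 pair of actions on the Kac–Paljutkin
algebra `H₈` is induced by a coquasitriangular structure on `H₈`. -/
theorem case21_case22_not_from_cqt {k H : Type} [Field k] [CharZero k] [IsAlgClosed k]
    [Ring H] [HopfAlgebra k H] (g h z : H) (b : Module.Basis (Fin 8) k H)
    (hKP : IsKacPaljutkin k H g h z b) :
    (¬ ∃ R Rinv : H ⊗[k] H →ₗ[k] k, IsCoquasitriangular R Rinv ∧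
        caseLeftAction k H b (case21Map k H g h z b) = cqtLeftAction k H R Rinv ∧
        caseRightAction k H b (case21Map k H g h z b) = cqtRightAction k H R Rinv) ∧
    (¬ ∃ R Rinv : H ⊗[k] H →ₗ[k] k, IsCoquasitriangular R Rinv ∧
        caseLeftAction k H b (case22Map k H g h z b) = cqtLeftAction k H R Rinv ∧
        caseRightAction k H b (case22Map k H g h z b) = cqtRightAction k H R Rinv) := by
  constructor
  · refine not_from_cqt g h z b hKP _ ?_
    have : g = b 1 := by rw [hKP.basis_eq]; rfl
    rw [this, case21Map, Module.Basis.constr_basis]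
    rfl
  · refine not_from_cqt g h z b hKP _ ?_
    have : g = b 1 := by rw [hKP.basis_eq]; rfl
    rw [this, case22Map, Module.Basis.constr_basis]
    rfl
end

section
/- For each of the Case 2.1 and Case 2.2 matched pairs of actions (⇀, ↼) on the Kac–Paljutkin algebra H_8, the associated Yang–Baxter operator r : H_8⊗H_8 → H_8⊗H_8, r(x⊗y) = (x₁ ⇀ y₁)⊗(x₂ ↼ y₂), is involutive: r∘r = id. -/
open TensorProduct

/-! ### Auxiliary machinery -/

noncomputable section Aux

open TensorProduct

set_option linter.unusedSectionVars false

variable {k H : Type} [Field k] [CharZero k] [Ring H] [HopfAlgebra k H]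

/-- grouplike shape relative to the basis `b` -/
def Gsh (b : Module.Basis (Fin 8) k H) (x : H) : Prop :=
  Coalgebra.comul (R := k) x = x ⊗ₜ[k] x ∧ grpCoeff k H b x = 1 ∧ zptCoeff k H b x = 0

/-- z-part shape relative to the basis `b` -/
def Zsh (b : Module.Basis (Fin 8) k H) (x c d : H) : Prop :=
  Coalgebra.comul (R := k) x
      = (2 : k)⁻¹ • (x ⊗ₜ[k] x + c ⊗ₜ[k] x + x ⊗ₜ[k] d - c ⊗ₜ[k] d) ∧
    zptCoeff k H b x = 1 ∧ zptCoeff k H b c = 1 ∧ zptCoeff k H b d = 1 ∧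
    grpCoeff k H b x = 0 ∧ grpCoeff k H b c = 0 ∧ grpCoeff k H b d = 0

section atoms
variable (b : Module.Basis (Fin 8) k H) (φ : H →ₗ[k] H)

lemma cla_tmul (x y : H) :
    caseLeftAction k H b φ (x ⊗ₜ[k] y) = grpCoeff k H b x • y + zptCoeff k H b x • φ y := by
  simp [caseLeftAction]

lemma cra_tmul (x y : H) :
    caseRightAction k H b φ (x ⊗ₜ[k] y) = grpCoeff k H b y • x + zptCoeff k H b y • φ x := by
  simp [caseRightAction, cla_tmul]

lemma ybOp_tmul (x y : H) :
    ybOp k H (caseLeftAction k H b φ) (caseRightAction k H b φ) (x ⊗ₜ[k] y)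
      = (TensorProduct.map (caseLeftAction k H b φ) (caseRightAction k H b φ))
          ((TensorProduct.tensorTensorTensorComm k H H H H)
            ((Coalgebra.comul (R := k) x) ⊗ₜ[k] (Coalgebra.comul (R := k) y))) := by
  simp [ybOp, sweedler2]

lemma ybGG {x y : H} (hx : Gsh b x) (hy : Gsh b y) :
    ybOp k H (caseLeftAction k H b φ) (caseRightAction k H b φ) (x ⊗ₜ[k] y) = y ⊗ₜ[k] x := by
  obtain ⟨hx1, hx2, hx3⟩ := hx
  obtain ⟨hy1, hy2, hy3⟩ := hy
  simp [ybOp_tmul, hx1, hy1, cla_tmul, cra_tmul, hx2, hx3, hy2, hy3]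

lemma ybGZ {x y c d : H} (hx : Gsh b x) (hy : Zsh b y c d) :
    ybOp k H (caseLeftAction k H b φ) (caseRightAction k H b φ) (x ⊗ₜ[k] y)
      = y ⊗ₜ[k] φ x := by
  obtain ⟨hx1, hx2, hx3⟩ := hx
  obtain ⟨hy1, hy2, hy3, hy4, hy5, hy6, hy7⟩ := hy
  simp [ybOp_tmul, hx1, hy1, cla_tmul, cra_tmul, hx2, hx3, hy2, hy3, hy4, hy5, hy6, hy7,
    tmul_add, tmul_sub, add_tmul, sub_tmul, ← smul_tmul', tmul_smul]
  match_scalars <;> norm_num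

lemma ybZG {x y c d : H} (hx : Zsh b x c d) (hy : Gsh b y) :
    ybOp k H (caseLeftAction k H b φ) (caseRightAction k H b φ) (x ⊗ₜ[k] y)
      = φ y ⊗ₜ[k] x := by
  obtain ⟨hx1, hx2, hx3, hx4, hx5, hx6, hx7⟩ := hx
  obtain ⟨hy1, hy2, hy3⟩ := hy
  simp [ybOp_tmul, hx1, hy1, cla_tmul, cra_tmul, hx2, hx3, hx4, hx5, hx6, hx7, hy2, hy3,
    tmul_add, tmul_sub, add_tmul, sub_tmul, ← smul_tmul', tmul_smul]
  match_scalars <;> norm_num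

lemma ybZZ {x y c d c' d' : H} (hx : Zsh b x c d) (hy : Zsh b y c' d') :
    ybOp k H (caseLeftAction k H b φ) (caseRightAction k H b φ) (x ⊗ₜ[k] y)
      = φ y ⊗ₜ[k] φ x := by
  obtain ⟨hx1, hx2, hx3, hx4, hx5, hx6, hx7⟩ := hx
  obtain ⟨hy1, hy2, hy3, hy4, hy5, hy6, hy7⟩ := hy
  simp [ybOp_tmul, hx1, hy1, cla_tmul, cra_tmul, hx2, hx3, hx4, hx5, hx6, hx7,
    hy2, hy3, hy4, hy5, hy6, hy7,
    tmul_add, tmul_sub, add_tmul, sub_tmul, ← smul_tmul', tmul_smul]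
  match_scalars <;> norm_num

end atoms

/-- bilinear extension of a pointwise formula for a linear map on a tensor product. -/
lemma span_ext {S T : Set H} {A B : H →ₗ[k] H} {F : H ⊗[k] H →ₗ[k] H ⊗[k] H}
    (hatom : ∀ u ∈ S, ∀ v ∈ T, F (u ⊗ₜ[k] v) = A v ⊗ₜ[k] B u) :
    ∀ u ∈ Submodule.span k S, ∀ v ∈ Submodule.span k T, F (u ⊗ₜ[k] v) = A v ⊗ₜ[k] B u := by
  intro u hu
  induction hu using Submodule.span_induction with
  | mem u hu =>
    intro v hv
    induction hv using Submodule.span_induction with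
    | mem v hv => exact hatom u hu v hv
    | zero => simp
    | add v w _ _ ihv ihw => simp [tmul_add, ihv, ihw, add_tmul]
    | smul a v _ ihv => rw [tmul_smul, map_smul, ihv, map_smul, smul_tmul']
  | zero => intro v hv; simp
  | add u w _ _ ihu ihw => intro v hv; simp [add_tmul, ihu v hv, ihw v hv, tmul_add]
  | smul a u _ ihu =>
    exact fun v hv => by rw [← smul_tmul', map_smul, ihu v hv, map_smul, ← tmul_smul]

/-- The main involutivity criterion. -/
lemma main_aux (g h z : H) (b : Module.Basis (Fin 8) k H) (hKP : IsKacPaljutkin k H g h z b)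
    (φ : H →ₗ[k] H)
    (hφG : ∀ u ∈ ({1, g, h, g * h} : Set H),
      φ u ∈ Submodule.span k ({1, g, h, g * h} : Set H))
    (hφZ : ∀ u ∈ ({z, g * z, h * z, g * h * z} : Set H),
      φ u ∈ Submodule.span k ({z, g * z, h * z, g * h * z} : Set H))
    (hφφ : ∀ u ∈ ({1, g, h, g * h} : Set H) ∪ ({z, g * z, h * z, g * h * z} : Set H),
      φ (φ u) = u) :
    ybOp k H (caseLeftAction k H b φ) (caseRightAction k H b φ) ∘ₗ
      ybOp k H (caseLeftAction k H b φ) (caseRightAction k H b φ) = LinearMap.id := by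
  obtain ⟨hbeq, hg2, hh2, hz2, hcomm, hzg, hzh, cg, ch, cz, _, _, _, _, _, _⟩ := hKP
  -- the basis vectors
  have hb : ∀ i : Fin 8, b i = ![1, g, h, g * h, z, g * z, h * z, g * h * z] i := fun i => by
    rw [hbeq]
  have hb0 : b 0 = 1 := hb 0
  have hb1 : b 1 = g := hb 1
  have hb2 : b 2 = h := hb 2
  have hb3 : b 3 = g * h := hb 3
  have hb4 : b 4 = z := hb 4
  have hb5 : b 5 = g * z := hb 5
  have hb6 : b 6 = h * z := hb 6
  have hb7 : b 7 = g * h * z := hb 7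
  -- products
  have hgh : h * (g * h) = g := by
    rw [← mul_assoc, ← hcomm, mul_assoc, hh2, mul_one]
  have hggh : g * (g * h) = h := by rw [← mul_assoc, hg2, one_mul]
  have hghg : (g * h) * g = h := by rw [mul_assoc, ← hcomm, ← mul_assoc, hg2, one_mul]
  have hghh : (g * h) * h = g := by rw [mul_assoc, hh2, mul_one]
  have p1 : g * (g * z) = z := by rw [← mul_assoc, hg2, one_mul]
  have p2 : g * (h * z) = g * h * z := (mul_assoc g h z).symm
  have p3 : h * (g * z) = g * h * z := by rw [← mul_assoc, ← hcomm]
  have p4 : h * (h * z) = z := by rw [← mul_assoc, hh2, one_mul]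
  have p5 : h * (g * h * z) = g * z := by rw [← mul_assoc, hgh]
  have p6 : g * (g * h * z) = h * z := by rw [← mul_assoc, hggh]
  have p7 : (g * h) * (g * z) = h * z := by rw [← mul_assoc, hghg]
  have p8 : (g * h) * (h * z) = g * z := by rw [← mul_assoc, hghh]
  have p9 : (g * h) * (g * h * z) = z := by
    rw [← mul_assoc, mul_assoc g h (g*h), hgh, hg2, one_mul]
  -- coordinates
  have hcoord : ∀ i j : Fin 8, b.coord i (b j) = if j = i then 1 else 0 := fun i j => by
    simp [Module.Basis.coord_apply, Module.Basis.repr_self, Finsupp.single_apply]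
  -- comultiplications
  have c0 : Coalgebra.comul (R := k) (1 : H) = (1 : H) ⊗ₜ[k] 1 := by
    rw [Bialgebra.comul_one, Algebra.TensorProduct.one_def]
  have c3 : Coalgebra.comul (R := k) (g * h) = (g * h) ⊗ₜ[k] (g * h) := by
    rw [Bialgebra.comul_mul, cg, ch, Algebra.TensorProduct.tmul_mul_tmul]
  have c4 : Coalgebra.comul (R := k) z
      = (2 : k)⁻¹ • (z ⊗ₜ[k] z + (g * z) ⊗ₜ[k] z + z ⊗ₜ[k] (h * z)
          - (g * z) ⊗ₜ[k] (h * z)) := cz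
  have c5 : Coalgebra.comul (R := k) (g * z)
      = (2 : k)⁻¹ • ((g * z) ⊗ₜ[k] (g * z) + z ⊗ₜ[k] (g * z) + (g * z) ⊗ₜ[k] (g * h * z)
          - z ⊗ₜ[k] (g * h * z)) := by
    rw [Bialgebra.comul_mul, cg, cz]
    simp only [mul_smul_comm, mul_add, mul_sub, Algebra.TensorProduct.tmul_mul_tmul,
      p1, p2, p3, p4, p5, p6, p7, p8, p9]
  have c6 : Coalgebra.comul (R := k) (h * z)
      = (2 : k)⁻¹ • ((h * z) ⊗ₜ[k] (h * z) + (g * h * z) ⊗ₜ[k] (h * z) + (h * z) ⊗ₜ[k] z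
          - (g * h * z) ⊗ₜ[k] z) := by
    rw [Bialgebra.comul_mul, ch, cz]
    simp only [mul_smul_comm, mul_add, mul_sub, Algebra.TensorProduct.tmul_mul_tmul,
      p1, p2, p3, p4, p5, p6, p7, p8, p9]
  have c7 : Coalgebra.comul (R := k) (g * h * z)
      = (2 : k)⁻¹ • ((g * h * z) ⊗ₜ[k] (g * h * z) + (h * z) ⊗ₜ[k] (g * h * z)
          + (g * h * z) ⊗ₜ[k] (g * z) - (h * z) ⊗ₜ[k] (g * z)) := by
    rw [Bialgebra.comul_mul, c3, cz]
    simp only [mul_smul_comm, mul_add, mul_sub, Algebra.TensorProduct.tmul_mul_tmul,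
      p1, p2, p3, p4, p5, p6, p7, p8, p9]
  -- shapes
  have hGsh : ∀ u ∈ ({1, g, h, g * h} : Set H), Gsh b u := by
    intro u hu
    simp only [Set.mem_insert_iff, Set.mem_singleton_iff] at hu
    rcases hu with rfl | rfl | rfl | rfl
    · exact ⟨c0, by rw [← hb0]; simp [grpCoeff, hcoord], by rw [← hb0]; simp [zptCoeff, hcoord]⟩
    · exact ⟨cg, by rw [← hb1]; simp [grpCoeff, hcoord], by rw [← hb1]; simp [zptCoeff, hcoord]⟩
    · exact ⟨ch, by rw [← hb2]; simp [grpCoeff, hcoord], by rw [← hb2]; simp [zptCoeff, hcoord]⟩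
    · exact ⟨c3, by rw [← hb3]; simp [grpCoeff, hcoord], by rw [← hb3]; simp [zptCoeff, hcoord]⟩
  have hz4 : zptCoeff k H b z = 1 := by rw [← hb4]; simp [zptCoeff, hcoord]
  have hz5 : zptCoeff k H b (g * z) = 1 := by rw [← hb5]; simp [zptCoeff, hcoord]
  have hz6 : zptCoeff k H b (h * z) = 1 := by rw [← hb6]; simp [zptCoeff, hcoord]
  have hz7 : zptCoeff k H b (g * h * z) = 1 := by rw [← hb7]; simp [zptCoeff, hcoord]
  have hg4 : grpCoeff k H b z = 0 := by rw [← hb4]; simp [grpCoeff, hcoord]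
  have hg5 : grpCoeff k H b (g * z) = 0 := by rw [← hb5]; simp [grpCoeff, hcoord]
  have hg6 : grpCoeff k H b (h * z) = 0 := by rw [← hb6]; simp [grpCoeff, hcoord]
  have hg7 : grpCoeff k H b (g * h * z) = 0 := by rw [← hb7]; simp [grpCoeff, hcoord]
  have hZsh : ∀ u ∈ ({z, g * z, h * z, g * h * z} : Set H), ∃ c d, Zsh b u c d := by
    intro u hu
    simp only [Set.mem_insert_iff, Set.mem_singleton_iff] at hu
    rcases hu with h' | h' | h' | h'
    · rw [h']; exact ⟨g * z, h * z, c4, hz4, hz5, hz6, hg4, hg5, hg6⟩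
    · rw [h']; exact ⟨z, g * h * z, c5, hz5, hz4, hz7, hg5, hg4, hg7⟩
    · rw [h']; exact ⟨g * h * z, z, c6, hz6, hz7, hz4, hg6, hg7, hg4⟩
    · rw [h']; exact ⟨h * z, g * z, c7, hz7, hz6, hz5, hg7, hg6, hg5⟩
  -- span-level formulas
  have rGG := span_ext (A := LinearMap.id) (B := LinearMap.id)
    (F := ybOp k H (caseLeftAction k H b φ) (caseRightAction k H b φ))
    (fun u hu v hv => ybGG b φ (hGsh u hu) (hGsh v hv))
  have rGZ := span_ext (A := LinearMap.id) (B := φ)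
    (F := ybOp k H (caseLeftAction k H b φ) (caseRightAction k H b φ))
    (fun u hu v hv => by
      obtain ⟨c, d, hcd⟩ := hZsh v hv
      exact ybGZ b φ (hGsh u hu) hcd)
  have rZG := span_ext (A := φ) (B := LinearMap.id)
    (F := ybOp k H (caseLeftAction k H b φ) (caseRightAction k H b φ))
    (fun u hu v hv => by
      obtain ⟨c, d, hcd⟩ := hZsh u hu
      exact ybZG b φ hcd (hGsh v hv))
  have rZZ := span_ext (A := φ) (B := φ)
    (F := ybOp k H (caseLeftAction k H b φ) (caseRightAction k H b φ))
    (fun u hu v hv => by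
      obtain ⟨c, d, hcd⟩ := hZsh u hu
      obtain ⟨c', d', hcd'⟩ := hZsh v hv
      exact ybZZ b φ hcd hcd')
  -- conclusion
  refine Module.Basis.ext (b.tensorProduct b) ?_
  rintro ⟨i, j⟩
  rw [Module.Basis.tensorProduct_apply, LinearMap.comp_apply, LinearMap.id_apply]
  have hmem : ∀ i : Fin 8,
      b i ∈ ({1, g, h, g * h} : Set H) ∨ b i ∈ ({z, g * z, h * z, g * h * z} : Set H) := by
    intro i
    fin_cases i <;>
      simp only [hb0, hb1, hb2, hb3, hb4, hb5, hb6, hb7, Set.mem_insert_iff,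
        Set.mem_singleton_iff] <;> tauto
  rcases hmem i with hi | hi <;> rcases hmem j with hj | hj
  · rw [rGG _ (Submodule.subset_span hi) _ (Submodule.subset_span hj)]
    simp only [LinearMap.id_apply]
    rw [rGG _ (Submodule.subset_span hj) _ (Submodule.subset_span hi)]
    simp only [LinearMap.id_apply]
  · rw [rGZ _ (Submodule.subset_span hi) _ (Submodule.subset_span hj)]
    simp only [LinearMap.id_apply]
    rw [rZG _ (Submodule.subset_span hj) _ (hφG _ hi)]
    simp only [LinearMap.id_apply]
    rw [hφφ _ (Set.mem_union_left _ hi)]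
  · rw [rZG _ (Submodule.subset_span hi) _ (Submodule.subset_span hj)]
    simp only [LinearMap.id_apply]
    rw [rGZ _ (hφG _ hj) _ (Submodule.subset_span hi)]
    simp only [LinearMap.id_apply]
    rw [hφφ _ (Set.mem_union_left _ hj)]
  · rw [rZZ _ (Submodule.subset_span hi) _ (Submodule.subset_span hj)]
    rw [rZZ _ (hφZ _ hj) _ (hφZ _ hi),
      hφφ _ (Set.mem_union_right _ hi), hφφ _ (Set.mem_union_right _ hj)]

end Aux


/-- The Yang–Baxter operators associated to the Case 2.1 and Case 2.2 matched pairs of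
actions on the Kac–Paljutkin algebra `H₈` are involutive. -/
theorem case21_case22_ybOp_involutive {k H : Type} [Field k] [CharZero k] [IsAlgClosed k]
    [Ring H] [HopfAlgebra k H] (g h z : H) (b : Module.Basis (Fin 8) k H)
    (hKP : IsKacPaljutkin k H g h z b) :
    (ybOp k H (caseLeftAction k H b (case21Map k H g h z b))
        (caseRightAction k H b (case21Map k H g h z b)) ∘ₗ
      ybOp k H (caseLeftAction k H b (case21Map k H g h z b))
        (caseRightAction k H b (case21Map k H g h z b)) = LinearMap.id) ∧
    (ybOp k H (caseLeftAction k H b (case22Map k H g h z b))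
        (caseRightAction k H b (case22Map k H g h z b)) ∘ₗ
      ybOp k H (caseLeftAction k H b (case22Map k H g h z b))
        (caseRightAction k H b (case22Map k H g h z b)) = LinearMap.id) := by
  have hg2 := hKP.g_sq
  have hh2 := hKP.h_sq
  have hcomm := hKP.gh_comm
  have hb : ∀ i : Fin 8, b i = ![1, g, h, g * h, z, g * z, h * z, g * h * z] i := fun i => by
    rw [hKP.basis_eq]
  have hb0 : b 0 = 1 := hb 0
  have hb1 : b 1 = g := hb 1
  have hb2 : b 2 = h := hb 2
  have hb3 : b 3 = g * h := hb 3
  have hb4 : b 4 = z := hb 4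
  have hb5 : b 5 = g * z := hb 5
  have hb6 : b 6 = h * z := hb 6
  have hb7 : b 7 = g * h * z := hb 7
  have hgh : h * (g * h) = g := by
    rw [← mul_assoc, ← hcomm, mul_assoc, hh2, mul_one]
  have hggh : g * (g * h) = h := by rw [← mul_assoc, hg2, one_mul]
  have hghg : (g * h) * g = h := by rw [mul_assoc, ← hcomm, ← mul_assoc, hg2, one_mul]
  have hghh : (g * h) * h = g := by rw [mul_assoc, hh2, mul_one]
  have p1 : g * (g * z) = z := by rw [← mul_assoc, hg2, one_mul]
  have p2 : g * (h * z) = g * h * z := (mul_assoc g h z).symm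
  have p3 : h * (g * z) = g * h * z := by rw [← mul_assoc, ← hcomm]
  have p4 : h * (h * z) = z := by rw [← mul_assoc, hh2, one_mul]
  have p5 : h * (g * h * z) = g * z := by rw [← mul_assoc, hgh]
  have p6 : g * (g * h * z) = h * z := by rw [← mul_assoc, hggh]
  have p7 : (g * h) * (g * z) = h * z := by rw [← mul_assoc, hghg]
  have p8 : (g * h) * (h * z) = g * z := by rw [← mul_assoc, hghh]
  have p9 : (g * h) * (g * h * z) = z := by
    rw [← mul_assoc, mul_assoc g h (g * h), hgh, hg2, one_mul]
  -- expansions of the translates of `z³`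
  have e4 : zCubed k g h z = (2 : k)⁻¹ • (z + g * z + h * z - g * h * z) := rfl
  have e5 : h * zCubed k g h z = (2 : k)⁻¹ • (h * z + g * h * z + z - g * z) := by
    simp only [zCubed, mul_smul_comm, mul_add, mul_sub, p3, p4, p5]
  have e6 : g * zCubed k g h z = (2 : k)⁻¹ • (g * z + z + g * h * z - h * z) := by
    simp only [zCubed, mul_smul_comm, mul_add, mul_sub, p1, p2, p6]
  have e7 : (g * h) * zCubed k g h z = (2 : k)⁻¹ • (g * h * z + h * z + g * z - z) := by
    simp only [zCubed, mul_smul_comm, mul_add, mul_sub, p7, p8, p9]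
  -- memberships
  have m1 : (1 : H) ∈ ({1, g, h, g * h} : Set H) := by simp
  have m2 : g ∈ ({1, g, h, g * h} : Set H) := by simp
  have m3 : h ∈ ({1, g, h, g * h} : Set H) := by simp
  have m4 : g * h ∈ ({1, g, h, g * h} : Set H) := by simp
  have m5 : z ∈ ({z, g * z, h * z, g * h * z} : Set H) := by simp
  have m6 : g * z ∈ ({z, g * z, h * z, g * h * z} : Set H) := by simp
  have m7 : h * z ∈ ({z, g * z, h * z, g * h * z} : Set H) := by simp
  have m8 : g * h * z ∈ ({z, g * z, h * z, g * h * z} : Set H) := by simp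
  have spanZ4 : ∀ w1 w2 w3 w4 : H, w1 ∈ ({z, g * z, h * z, g * h * z} : Set H) →
      w2 ∈ ({z, g * z, h * z, g * h * z} : Set H) →
      w3 ∈ ({z, g * z, h * z, g * h * z} : Set H) →
      w4 ∈ ({z, g * z, h * z, g * h * z} : Set H) →
      (2 : k)⁻¹ • (w1 + w2 + w3 - w4)
        ∈ Submodule.span k ({z, g * z, h * z, g * h * z} : Set H) :=
    fun w1 w2 w3 w4 h1 h2 h3 h4 =>
      Submodule.smul_mem _ _ (Submodule.sub_mem _
        (Submodule.add_mem _ (Submodule.add_mem _ (Submodule.subset_span h1)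
          (Submodule.subset_span h2)) (Submodule.subset_span h3))
        (Submodule.subset_span h4))
  constructor
  · -- Case 2.1
    set φ := case21Map k H g h z b with hφ
    have f0 : φ (1 : H) = 1 := by
      conv_lhs => rw [← hb0]
      rw [hφ, case21Map, b.constr_basis]; rfl
    have f1 : φ g = h := by
      conv_lhs => rw [← hb1]
      rw [hφ, case21Map, b.constr_basis]; rfl
    have f2 : φ h = g := by
      conv_lhs => rw [← hb2]
      rw [hφ, case21Map, b.constr_basis]; rfl
    have f3 : φ (g * h) = g * h := by
      conv_lhs => rw [← hb3]
      rw [hφ, case21Map, b.constr_basis]; rfl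
    have f4 : φ z = zCubed k g h z := by
      conv_lhs => rw [← hb4]
      rw [hφ, case21Map, b.constr_basis]; rfl
    have f5 : φ (g * z) = h * zCubed k g h z := by
      conv_lhs => rw [← hb5]
      rw [hφ, case21Map, b.constr_basis]; rfl
    have f6 : φ (h * z) = g * zCubed k g h z := by
      conv_lhs => rw [← hb6]
      rw [hφ, case21Map, b.constr_basis]; rfl
    have f7 : φ (g * h * z) = (g * h) * zCubed k g h z := by
      conv_lhs => rw [← hb7]
      rw [hφ, case21Map, b.constr_basis]; rfl
    apply main_aux g h z b hKP
    · intro u hu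
      simp only [Set.mem_insert_iff, Set.mem_singleton_iff] at hu
      rcases hu with h' | h' | h' | h' <;> rw [h']
      · rw [f0]; exact Submodule.subset_span m1
      · rw [f1]; exact Submodule.subset_span m3
      · rw [f2]; exact Submodule.subset_span m2
      · rw [f3]; exact Submodule.subset_span m4
    · intro u hu
      simp only [Set.mem_insert_iff, Set.mem_singleton_iff] at hu
      rcases hu with h' | h' | h' | h' <;> rw [h']
      · rw [f4, e4]; exact spanZ4 _ _ _ _ m5 m6 m7 m8
      · rw [f5, e5]; exact spanZ4 _ _ _ _ m7 m8 m5 m6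
      · rw [f6, e6]; exact spanZ4 _ _ _ _ m6 m5 m8 m7
      · rw [f7, e7]; exact spanZ4 _ _ _ _ m8 m7 m6 m5
    · intro u hu
      simp only [Set.mem_union, Set.mem_insert_iff, Set.mem_singleton_iff] at hu
      rcases hu with (h' | h' | h' | h') | (h' | h' | h' | h') <;> rw [h']
      · rw [f0, f0]
      · rw [f1, f2]
      · rw [f2, f1]
      · rw [f3, f3]
      · rw [f4, e4]
        simp only [map_smul, map_add, map_sub, f4, f5, f6, f7, e4, e5, e6, e7, zCubed,
          mul_smul_comm, mul_add, mul_sub, p1, p2, p3, p4, p5, p6, p7, p8, p9]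
        match_scalars <;> norm_num
      · rw [f5, e5]
        simp only [map_smul, map_add, map_sub, f4, f5, f6, f7, e4, e5, e6, e7, zCubed,
          mul_smul_comm, mul_add, mul_sub, p1, p2, p3, p4, p5, p6, p7, p8, p9]
        match_scalars <;> norm_num
      · rw [f6, e6]
        simp only [map_smul, map_add, map_sub, f4, f5, f6, f7, e4, e5, e6, e7, zCubed,
          mul_smul_comm, mul_add, mul_sub, p1, p2, p3, p4, p5, p6, p7, p8, p9]
        match_scalars <;> norm_num
      · rw [f7, e7]
        simp only [map_smul, map_add, map_sub, f4, f5, f6, f7, e4, e5, e6, e7, zCubed,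
          mul_smul_comm, mul_add, mul_sub, p1, p2, p3, p4, p5, p6, p7, p8, p9]
        match_scalars <;> norm_num
  · -- Case 2.2
    set φ := case22Map k H g h z b with hφ
    have f0 : φ (1 : H) = 1 := by
      conv_lhs => rw [← hb0]
      rw [hφ, case22Map, b.constr_basis]; rfl
    have f1 : φ g = h := by
      conv_lhs => rw [← hb1]
      rw [hφ, case22Map, b.constr_basis]; rfl
    have f2 : φ h = g := by
      conv_lhs => rw [← hb2]
      rw [hφ, case22Map, b.constr_basis]; rfl
    have f3 : φ (g * h) = g * h := by
      conv_lhs => rw [← hb3]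
      rw [hφ, case22Map, b.constr_basis]; rfl
    have f4 : φ z = (g * h) * zCubed k g h z := by
      conv_lhs => rw [← hb4]
      rw [hφ, case22Map, b.constr_basis]; rfl
    have f5 : φ (g * z) = g * zCubed k g h z := by
      conv_lhs => rw [← hb5]
      rw [hφ, case22Map, b.constr_basis]; rfl
    have f6 : φ (h * z) = h * zCubed k g h z := by
      conv_lhs => rw [← hb6]
      rw [hφ, case22Map, b.constr_basis]; rfl
    have f7 : φ (g * h * z) = zCubed k g h z := by
      conv_lhs => rw [← hb7]
      rw [hφ, case22Map, b.constr_basis]; rfl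
    apply main_aux g h z b hKP
    · intro u hu
      simp only [Set.mem_insert_iff, Set.mem_singleton_iff] at hu
      rcases hu with h' | h' | h' | h' <;> rw [h']
      · rw [f0]; exact Submodule.subset_span m1
      · rw [f1]; exact Submodule.subset_span m3
      · rw [f2]; exact Submodule.subset_span m2
      · rw [f3]; exact Submodule.subset_span m4
    · intro u hu
      simp only [Set.mem_insert_iff, Set.mem_singleton_iff] at hu
      rcases hu with h' | h' | h' | h' <;> rw [h']
      · rw [f4, e7]; exact spanZ4 _ _ _ _ m8 m7 m6 m5
      · rw [f5, e6]; exact spanZ4 _ _ _ _ m6 m5 m8 m7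
      · rw [f6, e5]; exact spanZ4 _ _ _ _ m7 m8 m5 m6
      · rw [f7, e4]; exact spanZ4 _ _ _ _ m5 m6 m7 m8
    · intro u hu
      simp only [Set.mem_union, Set.mem_insert_iff, Set.mem_singleton_iff] at hu
      rcases hu with (h' | h' | h' | h') | (h' | h' | h' | h') <;> rw [h']
      · rw [f0, f0]
      · rw [f1, f2]
      · rw [f2, f1]
      · rw [f3, f3]
      · rw [f4, e7]
        simp only [map_smul, map_add, map_sub, f4, f5, f6, f7, e4, e5, e6, e7, zCubed,
          mul_smul_comm, mul_add, mul_sub, p1, p2, p3, p4, p5, p6, p7, p8, p9]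
        match_scalars <;> norm_num
      · rw [f5, e6]
        simp only [map_smul, map_add, map_sub, f4, f5, f6, f7, e4, e5, e6, e7, zCubed,
          mul_smul_comm, mul_add, mul_sub, p1, p2, p3, p4, p5, p6, p7, p8, p9]
        match_scalars <;> norm_num
      · rw [f6, e5]
        simp only [map_smul, map_add, map_sub, f4, f5, f6, f7, e4, e5, e6, e7, zCubed,
          mul_smul_comm, mul_add, mul_sub, p1, p2, p3, p4, p5, p6, p7, p8, p9]
        match_scalars <;> norm_num
      · rw [f7, e4]
        simp only [map_smul, map_add, map_sub, f4, f5, f6, f7, e4, e5, e6, e7, zCubed,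
          mul_smul_comm, mul_add, mul_sub, p1, p2, p3, p4, p5, p6, p7, p8, p9]
        match_scalars <;> norm_num
end
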